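/- arXiv:1209.6473 — 4 statements merged into one kernel-verified Lean document; each statement's English description precedes it below -/
import Mathlib

section
/- If condition (c*) holds — for each ε > 0 there is δ > 0 such that limsup_n P(M_n(δ) > ε | H) < ε for all H ∈ G with P(H) > 0 — and U > 0 is G-measurable, then condition (e) holds: inf_{δ>0} limsup_n P(M_{⌊k_n U⌋}(δ) > ε) = 0 for all ε > 0. -/
open MeasureTheory ProbabilityTheory Filter Real Topology Set

/-- A bounded continuous real function. -/
def BddCont {S : Type*} [TopologicalSpace S] (f : S → ℝ) : Prop :=
  Continuous f ∧ ∃ C, ∀ x, |f x| ≤ C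

/-- Conditional expectation of `g` given the event `H`: `E[g | H]`. -/
noncomputable def cexp {Ω : Type*} {_mΩ : MeasurableSpace Ω} (P : Measure Ω) (H : Set Ω)
    (g : Ω → ℝ) : ℝ :=
  (∫ ω in H, g ω ∂P) / (P H).toReal

/-- `X n` converges `G`-stably to the kernel `K`: for every `H ∈ G` with `P H > 0` and every
bounded continuous `f`, `E[f(X n) | H] → E[K(f) | H]`. -/
def StablyTo {Ω S : Type*} (G : MeasurableSpace Ω) {_mΩ : MeasurableSpace Ω} [TopologicalSpace S]
    [MeasurableSpace S] (P : Measure Ω) (X : ℕ → Ω → S) (K : Ω → Measure S) : Prop :=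
  ∀ H : Set Ω, MeasurableSet[G] H → 0 < P H →
    ∀ f : S → ℝ, BddCont f →
      Tendsto (fun n => cexp P H fun ω => f (X n ω)) atTop
        (𝓝 (cexp P H fun ω => ∫ x, f x ∂(K ω)))

/-- The event `{M_{R}(δ) > ε}` where `M_R(δ) = max_{j : |R - j| ≤ R δ} d(X j, X R)`. -/
def Bad {Ω S : Type*} [PseudoMetricSpace S] (X : ℕ → Ω → S) (R : Ω → ℕ) (δ ε : ℝ) :
    Set Ω :=
  {ω | ∃ j : ℕ, |(R ω : ℝ) - j| ≤ (R ω : ℝ) * δ ∧ ε < dist (X j ω) (X (R ω) ω)}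

/-- The fluctuation condition `inf_{δ>0} limsup_n P(M_{R_n}(δ) > ε) = 0` for all `ε > 0`,
for a sequence of (possibly random) indices `R n`. -/
def FlucIdx {Ω S : Type*} {_mΩ : MeasurableSpace Ω} [PseudoMetricSpace S] (P : Measure Ω)
    (X : ℕ → Ω → S) (R : ℕ → Ω → ℕ) : Prop :=
  ∀ ε > (0:ℝ), (⨅ δ : Set.Ioi (0:ℝ), Filter.limsup (fun n => P (Bad X (R n) (δ : ℝ) ε)) atTop) = 0

lemma bad_mono {Ω S : Type*} [PseudoMetricSpace S] (X : ℕ → Ω → S) (R : Ω → ℕ)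
    {δ1 δ2 ε1 ε2 : ℝ} (hδ : δ1 ≤ δ2) (hε : ε2 ≤ ε1) : Bad X R δ1 ε1 ⊆ Bad X R δ2 ε2 := by
  rintro ω ⟨j, h1, h2⟩
  exact ⟨j, h1.trans (mul_le_mul_of_nonneg_left hδ (Nat.cast_nonneg _)),
    lt_of_le_of_lt hε h2⟩

lemma incl_aux {Ω S : Type*} [PseudoMetricSpace S] (X : ℕ → Ω → S) (δ' ε a k u : ℝ)
    (hδ' : 0 < δ') (hδ'1 : δ' ≤ 1) (ha : 0 < a) (hka : 4 * (δ' + 1) ≤ k * a * δ')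
    (ω : Ω) (hu1 : a ≤ u) (hu2 : u < a * (1 + δ' / 8))
    (hmem : ∃ j : ℕ, |(⌊k * u⌋₊ : ℝ) - j| ≤ (⌊k * u⌋₊ : ℝ) * (δ' / 8) ∧
      ε < dist (X j ω) (X ⌊k * u⌋₊ ω)) :
    ∃ j : ℕ, |(⌊k * a⌋₊ : ℝ) - j| ≤ (⌊k * a⌋₊ : ℝ) * δ' ∧
      ε / 2 < dist (X j ω) (X ⌊k * a⌋₊ ω) := by
  have hk0 : 0 < k := by nlinarith [mul_pos ha hδ']
  have hka0 : 0 < k * a := mul_pos hk0 ha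
  have hku : k * a ≤ k * u := by nlinarith
  have hm1 : (⌊k * a⌋₊ : ℝ) ≤ k * a := Nat.floor_le hka0.le
  have hm2 : k * a < ⌊k * a⌋₊ + 1 := Nat.lt_floor_add_one _
  have hr1 : (⌊k * u⌋₊ : ℝ) ≤ k * u := Nat.floor_le (by linarith)
  have hmr : (⌊k * a⌋₊ : ℝ) ≤ (⌊k * u⌋₊ : ℝ) := by
    exact_mod_cast Nat.floor_mono hku
  have hr2 : (⌊k * u⌋₊ : ℝ) ≤ k * a * (1 + δ' / 8) := by nlinarith
  obtain ⟨j, hj1, hj2⟩ := hmem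
  set m := ⌊k * a⌋₊ with hm
  set r := ⌊k * u⌋₊ with hr
  have hmrabs : |(m : ℝ) - r| = (r : ℝ) - m := by
    rw [abs_sub_comm]; exact abs_of_nonneg (by linarith)
  have hwr : |(m : ℝ) - (r : ℝ)| ≤ (m : ℝ) * δ' := by
    rw [hmrabs]; nlinarith
  have hwj : |(m : ℝ) - j| ≤ (m : ℝ) * δ' := by
    have h1 : |(m : ℝ) - j| ≤ |(m : ℝ) - r| + |(r : ℝ) - j| := abs_sub_le _ _ _
    rw [hmrabs] at h1
    nlinarith
  rcases lt_or_ge (ε / 2) (dist (X j ω) (X m ω)) with h | h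
  · exact ⟨j, hwj, h⟩
  · refine ⟨r, by exact_mod_cast hwr, ?_⟩
    have ht : dist (X j ω) (X r ω) ≤ dist (X j ω) (X m ω) + dist (X m ω) (X r ω) :=
      dist_triangle _ _ _
    have : dist (X r ω) (X m ω) = dist (X m ω) (X r ω) := dist_comm _ _
    linarith


/-- condition (c*) implies condition (e), for `U > 0` `G`-measurable. -/
theorem stmt8 {Ω S : Type*} [mΩ : MeasurableSpace Ω] [MetricSpace S]
    [TopologicalSpace.SeparableSpace S]
    (P : Measure Ω) [IsProbabilityMeasure P]
    (G : MeasurableSpace Ω) (hG : G ≤ mΩ)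
    (X : ℕ → Ω → S) (k : ℕ → ℝ) (U : Ω → ℝ)
    (hk : ∀ n, 0 < k n) (hk' : Tendsto k atTop atTop)
    (hU : ∀ ω, 0 < U ω) (hUm : Measurable[G] U)
    (hcstar : ∀ ε > (0:ℝ), ∃ δ > (0:ℝ), ∀ H : Set Ω, MeasurableSet[G] H → 0 < P H →
      Filter.limsup (fun n => P (Bad X (fun _ => n) δ ε ∩ H) / P H) atTop
        < ENNReal.ofReal ε) :
    FlucIdx P X (fun n ω => ⌊k n * U ω⌋₊) := by
  classical
  have hUm' : @Measurable Ω ℝ mΩ _ U := hUm.mono hG le_rfl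
  intro ε hε
  refine le_antisymm (ENNReal.le_of_forall_pos_le_add fun rr hrr _ => ?_) zero_le
  rw [zero_add]
  set η : ℝ := (rr : ℝ) with hηdef
  have hη : 0 < η := hrr
  -- choose ε' and δ' from (c*)
  set ε' : ℝ := min (ε / 2) (η / 2) with hε'def
  have hε'pos : 0 < ε' := lt_min (by linarith) (by linarith)
  obtain ⟨δ₀, hδ₀, hcs⟩ := hcstar ε' hε'pos
  set δ' : ℝ := min δ₀ 1 with hδ'def
  have hδ'pos : 0 < δ' := lt_min hδ₀ one_pos
  have hδ'1 : δ' ≤ 1 := min_le_right _ _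
  -- (c*) consequence for δ', in eventual form
  have hcs' : ∀ H : Set Ω, MeasurableSet[G] H → 0 < P H →
      ∀ᶠ n : ℕ in atTop, P (Bad X (fun _ => n) δ' ε' ∩ H) ≤ ENNReal.ofReal ε' * P H := by
    intro H hH hPH
    have hlt : limsup (fun n => P (Bad X (fun _ => n) δ' ε' ∩ H) / P H) atTop
        < ENNReal.ofReal ε' := by
      refine lt_of_le_of_lt ?_ (hcs H hH hPH)
      refine limsup_le_limsup (Eventually.of_forall fun n => ?_)
      exact ENNReal.div_le_div_right
        (measure_mono (inter_subset_inter_left _ (bad_mono X _ (min_le_left _ _) le_rfl))) _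
    filter_upwards [eventually_lt_of_limsup_lt hlt] with n hn
    rw [ENNReal.div_lt_iff (Or.inl hPH.ne') (Or.inl (measure_ne_top P H))] at hn
    exact hn.le
  -- truncation of U
  set B : ℕ → Set Ω := fun m => (U ⁻¹' Set.Ico (1 / ((m : ℝ) + 1)) ((m : ℝ) + 1))ᶜ with hBdef
  have hBtend : Tendsto (fun m => P (B m)) atTop (𝓝 0) := by
    have hmeas : ∀ m : ℕ, @NullMeasurableSet Ω mΩ (B m) P :=
      fun m => (MeasurableSet.compl (hUm' measurableSet_Ico)).nullMeasurableSet
    have hanti : Antitone B := by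
      intro s t hst
      refine compl_subset_compl.mpr (preimage_mono (Set.Ico_subset_Ico ?_ ?_))
      · refine one_div_le_one_div_of_le (by positivity) ?_
        have : (s : ℝ) ≤ t := Nat.cast_le.mpr hst
        linarith
      · have : (s : ℝ) ≤ t := Nat.cast_le.mpr hst
        linarith
    have hempty : (⋂ m : ℕ, B m) = ∅ := by
      ext ω
      simp only [hBdef, mem_iInter, mem_compl_iff, mem_preimage, mem_Ico,
        mem_empty_iff_false, iff_false, not_forall, not_not]
      obtain ⟨m, hm⟩ := exists_nat_ge (max (1 / U ω) (U ω))
      have h1 : 1 / U ω ≤ m := le_trans (le_max_left _ _) hm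
      have h2 : U ω ≤ m := le_trans (le_max_right _ _) hm
      have h3 : 1 ≤ (m : ℝ) * U ω := by
        rw [div_le_iff₀ (hU ω)] at h1; linarith
      refine ⟨m, ?_, by linarith⟩
      rw [div_le_iff₀ (by positivity : (0:ℝ) < (m : ℝ) + 1)]
      nlinarith [hU ω]
    have := tendsto_measure_iInter_atTop hmeas hanti ⟨0, measure_ne_top _ _⟩
    rwa [hempty, measure_empty] at this
  obtain ⟨m₀, hm₀⟩ : ∃ m₀ : ℕ, P (B m₀) < ENNReal.ofReal (η / 2) :=
    (hBtend.eventually_lt_const (by simp [ENNReal.ofReal_pos]; linarith)).exists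
  set c : ℝ := 1 / ((m₀ : ℝ) + 1) with hcdef
  set Mb : ℝ := (m₀ : ℝ) + 1 with hMbdef
  have hc : 0 < c := by positivity
  set θ : ℝ := δ' / 8 with hθdef
  have hθ : 0 < θ := by positivity
  have h1θ : 1 < 1 + θ := by linarith
  obtain ⟨N, hN⟩ := pow_unbounded_of_one_lt (Mb / c) h1θ
  set a : ℕ → ℝ := fun i => c * (1 + θ) ^ i with hadef
  have hapos : ∀ i, 0 < a i := fun i => mul_pos hc (pow_pos (by linarith) i)
  have hamono : Monotone a := fun s t hst =>
    mul_le_mul_of_nonneg_left (pow_le_pow_right₀ (by linarith) hst) hc.le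
  have hasucc : ∀ i, a (i + 1) = a i * (1 + θ) := by
    intro i; simp only [hadef, pow_succ]; ring
  have haN : Mb < a N := by
    have h := (div_lt_iff₀ hc).mp hN
    simpa [hadef, mul_comm] using h
  set H : ℕ → Set Ω := fun i => U ⁻¹' Set.Ico (a i) (a (i + 1)) with hHdef
  have hHmeasG : ∀ i, MeasurableSet[G] (H i) := fun i => hUm measurableSet_Ico
  have hHmeas : ∀ i, MeasurableSet[mΩ] (H i) := fun i => hG _ (hHmeasG i)
  have hdisj : ∀ i j, i < j → Disjoint (H i) (H j) := by
    intro i j hij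
    rw [Set.disjoint_left]
    rintro ω ⟨h1, h2⟩ ⟨h3, h4⟩
    have : a (i + 1) ≤ a j := hamono hij
    linarith
  have hHdisj : (↑(Finset.range N) : Set ℕ).PairwiseDisjoint H := by
    intro i _ j _ hij
    rcases (Ne.lt_or_gt hij) with h | h
    · exact hdisj _ _ h
    · exact (hdisj _ _ h).symm
  have hcov : U ⁻¹' Set.Ico c Mb ⊆ ⋃ i ∈ Finset.range N, H i := by
    intro ω hω
    simp only [mem_preimage, mem_Ico] at hω
    set i := Nat.findGreatest (fun i => a i ≤ U ω) N with hidef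
    have ha0 : a 0 ≤ U ω := by
      simpa [hadef] using hω.1
    have hspec : a i ≤ U ω :=
      Nat.findGreatest_spec (P := fun i => a i ≤ U ω) (Nat.zero_le N) ha0
    have hiN : i ≤ N := Nat.findGreatest_le N
    have hilt : i < N := by
      rcases lt_or_eq_of_le hiN with h | h
      · exact h
      · exfalso; rw [h] at hspec; linarith [hω.2]
    have hub : U ω < a (i + 1) := by
      by_contra hcon
      push_neg at hcon
      exact Nat.findGreatest_is_greatest (P := fun i => a i ≤ U ω)
        (Nat.lt_succ_self i) hilt hcon
    simp only [mem_iUnion, Finset.mem_range]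
    exact ⟨i, hilt, hspec, hub⟩
  -- per-interval eventual bound
  have hstep : ∀ i ∈ Finset.range N, ∀ᶠ n : ℕ in atTop,
      P (Bad X (fun ω => ⌊k n * U ω⌋₊) θ ε ∩ H i) ≤ ENNReal.ofReal ε' * P (H i) := by
    intro i _
    by_cases hPi : P (H i) = 0
    · refine Eventually.of_forall fun n => ?_
      calc P (Bad X (fun ω => ⌊k n * U ω⌋₊) θ ε ∩ H i) ≤ P (H i) :=
            measure_mono inter_subset_right
        _ = 0 := hPi
        _ ≤ _ := zero_le
    · have hPi' : 0 < P (H i) := lt_of_le_of_ne zero_le (Ne.symm hPi)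
      obtain ⟨Ni, hNi⟩ := eventually_atTop.mp (hcs' (H i) (hHmeasG i) hPi')
      have htend1 : Tendsto (fun n => k n * a i) atTop atTop :=
        hk'.atTop_mul_const' (hapos i)
      have hev1 : ∀ᶠ n : ℕ in atTop, 4 * (δ' + 1) ≤ k n * a i * δ' := by
        filter_upwards [htend1.eventually_ge_atTop (4 * (δ' + 1) / δ')] with n hn
        rw [div_le_iff₀ hδ'pos] at hn
        exact hn
      have hev2 : ∀ᶠ n : ℕ in atTop, Ni ≤ ⌊k n * a i⌋₊ :=
        (tendsto_nat_floor_atTop.comp htend1).eventually_ge_atTop Ni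
      filter_upwards [hev1, hev2] with n h1 h2
      have hincl : Bad X (fun ω => ⌊k n * U ω⌋₊) θ ε ∩ H i ⊆
          Bad X (fun _ => ⌊k n * a i⌋₊) δ' ε' ∩ H i := by
        rintro ω ⟨hbad, hωi⟩
        refine ⟨?_, hωi⟩
        have hωi' : a i ≤ U ω ∧ U ω < a (i + 1) := hωi
        have hu2 : U ω < a i * (1 + δ' / 8) := by
          rw [← hasucc i] at *; exact hωi'.2
        obtain ⟨j, hj1, hj2⟩ := incl_aux X δ' ε (a i) (k n) (U ω) hδ'pos hδ'1 (hapos i)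
          h1 ω hωi'.1 hu2 hbad
        exact ⟨j, hj1, lt_of_le_of_lt (le_trans (min_le_left _ _) (le_refl (ε / 2))) hj2⟩
      exact le_trans (measure_mono hincl) (hNi _ h2)
  -- combine
  have hmain : ∀ᶠ n : ℕ in atTop,
      P (Bad X (fun ω => ⌊k n * U ω⌋₊) θ ε) ≤ ENNReal.ofReal η := by
    filter_upwards [(eventually_all_finset (Finset.range N)).mpr hstep] with n hn
    set Bn := Bad X (fun ω => ⌊k n * U ω⌋₊) θ ε with hBndef
    have hT : Bn ⊆ (Bn ∩ U ⁻¹' Set.Ico c Mb) ∪ B m₀ := by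
      intro ω hω
      by_cases h : ω ∈ U ⁻¹' Set.Ico c Mb
      · exact Or.inl ⟨hω, h⟩
      · exact Or.inr h
    calc P Bn ≤ P ((Bn ∩ U ⁻¹' Set.Ico c Mb) ∪ B m₀) := measure_mono hT
      _ ≤ P (Bn ∩ U ⁻¹' Set.Ico c Mb) + P (B m₀) := measure_union_le _ _
      _ ≤ P (⋃ i ∈ Finset.range N, Bn ∩ H i) + ENNReal.ofReal (η / 2) := by
          refine add_le_add (measure_mono ?_) hm₀.le
          rintro ω ⟨h1, h2⟩
          have h3 := hcov h2
          simp only [mem_iUnion, exists_prop] at h3 ⊢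
          obtain ⟨i, hi1, hi2⟩ := h3
          exact ⟨i, hi1, h1, hi2⟩
      _ ≤ (∑ i ∈ Finset.range N, P (Bn ∩ H i)) + ENNReal.ofReal (η / 2) := by
          gcongr
          exact measure_biUnion_finset_le _ _
      _ ≤ (∑ i ∈ Finset.range N, ENNReal.ofReal ε' * P (H i)) + ENNReal.ofReal (η / 2) := by
          gcongr with i hi
          exact hn i hi
      _ = ENNReal.ofReal ε' * (∑ i ∈ Finset.range N, P (H i)) + ENNReal.ofReal (η / 2) := by
          rw [Finset.mul_sum]
      _ = ENNReal.ofReal ε' * P (⋃ i ∈ Finset.range N, H i) + ENNReal.ofReal (η / 2) := by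
          rw [← measure_biUnion_finset hHdisj fun i _ => hHmeas i]
      _ ≤ ENNReal.ofReal ε' * 1 + ENNReal.ofReal (η / 2) := by
          gcongr
          exact prob_le_one
      _ ≤ ENNReal.ofReal (η / 2) + ENNReal.ofReal (η / 2) := by
          rw [mul_one]
          gcongr
          exact min_le_right _ _
      _ = ENNReal.ofReal η := by
          rw [← ENNReal.ofReal_add (by linarith) (by linarith)]
          norm_num
  have hfin : (⨅ δ : Set.Ioi (0:ℝ),
      Filter.limsup (fun n => P (Bad X (fun ω => ⌊k n * U ω⌋₊) (δ : ℝ) ε)) atTop)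
      ≤ ENNReal.ofReal η := by
    refine iInf_le_of_le ⟨θ, by simp only [mem_Ioi]; positivity⟩ ?_
    exact limsup_le_of_le (by isBoundedDefault) hmain
  refine le_trans hfin (le_of_eq ?_)
  rw [hηdef]
  exact ENNReal.ofReal_coe_nnreal
end

section
/- In the setting of the previous counterexample (X_n = 1_{A_n} with A_n = [log n, log(n+1)) mod 1 on [0,1) with Lebesgue measure), for every ε > 0 and δ ∈ (0,1): limsup_n P(M_n(δ) > ε) ≤ log((1+δ)/(1−δ)); in particular condition (c) holds: inf_{δ>0} limsup_n P(M_n(δ) > ε) = 0. -/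
open MeasureTheory ProbabilityTheory Filter Real Topology Set

/-- `A_n = [log n, log (n+1))` taken modulo `1`, as a subset of `[0,1)`. -/
def Amod (n : ℕ) : Set ℝ :=
  {x | x ∈ Set.Ico (0:ℝ) 1 ∧ ∃ m : ℤ, Real.log n ≤ x + m ∧ x + m < Real.log (n + 1)}

/-- `X_n = 1_{A_n}`, `X_0 = 0`. -/
noncomputable def Xmod : ℕ → ℝ → ℝ := fun n x =>
  if n = 0 then 0 else (Amod n).indicator (fun _ => (1:ℝ)) x

lemma log_diff_lt_one (j : ℕ) (hj : 1 ≤ j) :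
    Real.log (j + 1) - Real.log j < 1 := by
  have hjpos : (0:ℝ) < j := by exact_mod_cast hj
  have h2 : ((j:ℝ) + 1) ≤ 2 * j := by
    have : (1:ℝ) ≤ j := by exact_mod_cast hj
    linarith
  have := Real.log_le_log (by positivity) h2
  rw [Real.log_mul (by norm_num) (ne_of_gt hjpos)] at this
  have hlog2 : Real.log 2 < 1 := by
    have := Real.log_two_lt_d9
    linarith
  linarith

lemma log_diff_nonneg (j : ℕ) : 0 ≤ Real.log (j + 1) - Real.log j := by
  rcases Nat.eq_zero_or_pos j with h | h
  · subst h; simp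
  · have : (0:ℝ) < j := by exact_mod_cast h
    have := Real.log_le_log this (by linarith : (j:ℝ) ≤ j + 1)
    linarith

lemma vol_Amod (j : ℕ) (hj : 1 ≤ j) :
    volume (Amod j) ≤ ENNReal.ofReal (Real.log (j + 1) - Real.log j) := by
  set m0 : ℤ := ⌊Real.log j⌋ with hm0
  set a : ℝ := Real.log j - m0 with ha
  set b : ℝ := Real.log (j + 1) - m0 with hb
  have ha0 : 0 ≤ a := sub_nonneg.mpr (Int.floor_le _)
  have ha1 : a < 1 := by
    have := Int.lt_floor_add_one (Real.log j)
    simp only [ha]; linarith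
  have hL1 : b - a < 1 := by
    have := log_diff_lt_one j hj; simp only [ha, hb]; linarith
  have hL0 : 0 ≤ b - a := by
    have := log_diff_nonneg j; simp only [ha, hb]; linarith
  have hsub : Amod j ⊆ Set.Ico a (min b 1) ∪ Set.Ico 0 (b - 1) := by
    rintro x ⟨⟨hx0, hx1⟩, m, h1, h2⟩
    have hfl : (m0:ℝ) ≤ Real.log j := Int.floor_le _
    have hfl2 : Real.log j < m0 + 1 := Int.lt_floor_add_one _
    have hm_ge : m0 ≤ m := by
      have : (m0:ℝ) < m + 1 := by linarith
      exact_mod_cast Int.lt_add_one_iff.mp (by exact_mod_cast this)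
    have hm_le : m ≤ m0 + 1 := by
      have hb2 : Real.log (j + 1) < m0 + 2 := by
        have := log_diff_lt_one j hj; linarith
      have : (m:ℝ) < m0 + 2 := by linarith
      have : m < m0 + 2 := by exact_mod_cast this
      omega
    have hmm : m = m0 ∨ m = m0 + 1 := by omega
    rcases hmm with rfl | rfl
    · left
      constructor
      · simp only [ha]; linarith
      · exact lt_min (by simp only [hb]; push_cast; linarith) hx1
    · right
      constructor
      · exact hx0
      · simp only [hb]; push_cast at h2 ⊢; linarith
  calc volume (Amod j) ≤ volume (Set.Ico a (min b 1) ∪ Set.Ico 0 (b - 1)) :=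
        measure_mono hsub
    _ ≤ volume (Set.Ico a (min b 1)) + volume (Set.Ico 0 (b - 1)) := measure_union_le _ _
    _ ≤ ENNReal.ofReal (Real.log (j + 1) - Real.log j) := by
        rw [Real.volume_Ico, Real.volume_Ico]
        have hba : Real.log (j+1) - Real.log j = b - a := by simp only [ha, hb]; ring
        rcases le_or_gt b 1 with h | h
        · rw [min_eq_left h]
          have : ENNReal.ofReal (b - 1 - 0) = 0 := by
            rw [ENNReal.ofReal_eq_zero]; linarith
          rw [this, add_zero, hba]
        · rw [min_eq_right h.le, hba]
          rw [← ENNReal.ofReal_add (by linarith) (by linarith)]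
          apply ENNReal.ofReal_le_ofReal
          linarith

lemma tele (f : ℕ → ℝ) (l u : ℕ) (h : l ≤ u + 1) :
    ∑ j ∈ Finset.Icc l u, (f (j + 1) - f j) = f (u + 1) - f l := by
  have : Finset.Icc l u = Finset.Ico l (u + 1) := rfl
  rw [this, Finset.sum_Ico_eq_sum_range]
  have : ∀ i, f (l + i + 1) - f (l + i) =
      (fun k => f (l + k)) (i + 1) - (fun k => f (l + k)) i := by
    intro i; simp [Nat.add_assoc]
  simp only [this]
  rw [Finset.sum_range_sub (fun k => f (l + k))]
  congr 2
  omega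

lemma Xmod_ne (k : ℕ) (x : ℝ) (h : Xmod k x ≠ 0) : 1 ≤ k ∧ x ∈ Amod k := by
  unfold Xmod at h
  split_ifs at h with hk
  · exact absurd rfl h
  · refine ⟨Nat.one_le_iff_ne_zero.mpr hk, ?_⟩
    by_contra hx
    exact h (Set.indicator_of_notMem hx _)

lemma bad_bound (ε δ : ℝ) (hε : 0 < ε) (hδ : 0 < δ) (hδ1 : δ < 1) (n : ℕ) (hn : 1 ≤ n) :
    (volume.restrict (Set.Ico (0:ℝ) 1)) (Bad Xmod (fun _ => n) δ ε)
      ≤ ENNReal.ofReal (Real.log ((n:ℝ) * (1 + δ) + 1) - Real.log ((n:ℝ) * (1 - δ))) := by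
  have hnpos : (0:ℝ) < n := by exact_mod_cast hn
  have hlo : (0:ℝ) < (n:ℝ) * (1 - δ) := by nlinarith
  set l : ℕ := ⌈(n:ℝ) * (1 - δ)⌉₊ with hl
  set u : ℕ := ⌊(n:ℝ) * (1 + δ)⌋₊ with hu
  have hl1 : 1 ≤ l := Nat.one_le_iff_ne_zero.mpr (by
    simp only [hl, ne_eq, Nat.ceil_eq_zero, not_le]; exact hlo)
  -- n itself is in [l, u]
  have hln : l ≤ n := Nat.ceil_le.mpr (by nlinarith)
  have hnu : n ≤ u := Nat.le_floor (by nlinarith)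
  have hrange : ∀ j : ℕ, |(n:ℝ) - j| ≤ (n:ℝ) * δ → l ≤ j ∧ j ≤ u := by
    intro j hj
    rw [abs_le] at hj
    constructor
    · exact Nat.ceil_le.mpr (by nlinarith [hj.2])
    · exact Nat.le_floor (by nlinarith [hj.1])
  have hsub : Bad Xmod (fun _ => n) δ ε ⊆ ⋃ j ∈ Finset.Icc l u, Amod j := by
    rintro x ⟨j, hj, hd⟩
    have hne : Xmod j x ≠ Xmod n x := by
      intro h; rw [h, dist_self] at hd; linarith
    by_cases hz : Xmod j x = 0
    · have h2 := Xmod_ne n x (fun h => hne (hz.trans h.symm))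
      exact Set.mem_biUnion (Finset.mem_Icc.mpr ⟨hln, hnu⟩) h2.2
    · have h2 := Xmod_ne j x hz
      exact Set.mem_biUnion (Finset.mem_Icc.mpr (hrange j hj)) h2.2
  calc (volume.restrict (Set.Ico (0:ℝ) 1)) (Bad Xmod (fun _ => n) δ ε)
      ≤ (volume.restrict (Set.Ico (0:ℝ) 1)) (⋃ j ∈ Finset.Icc l u, Amod j) :=
        measure_mono hsub
    _ ≤ ∑ j ∈ Finset.Icc l u, (volume.restrict (Set.Ico (0:ℝ) 1)) (Amod j) :=
        measure_biUnion_finset_le _ _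
    _ ≤ ∑ j ∈ Finset.Icc l u, ENNReal.ofReal (Real.log (j + 1) - Real.log j) := by
        apply Finset.sum_le_sum
        intro j hjm
        rw [Finset.mem_Icc] at hjm
        exact le_trans (Measure.restrict_le_self _) (vol_Amod j (le_trans hl1 hjm.1))
    _ = ENNReal.ofReal (∑ j ∈ Finset.Icc l u, (Real.log (j + 1) - Real.log j)) := by
        rw [ENNReal.ofReal_sum_of_nonneg]
        intro j _; exact log_diff_nonneg j
    _ ≤ ENNReal.ofReal (Real.log ((n:ℝ) * (1 + δ) + 1) - Real.log ((n:ℝ) * (1 - δ))) := by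
        apply ENNReal.ofReal_le_ofReal
        have := tele (fun k : ℕ => Real.log k) l u (by omega)
        have hcast : ∀ j : ℕ, Real.log (j + 1) - Real.log j
            = Real.log ((j:ℕ) + 1 : ℕ) - Real.log j := by intro j; push_cast; ring_nf
        rw [show (∑ j ∈ Finset.Icc l u, (Real.log (↑j + 1) - Real.log ↑j))
            = Real.log ((u + 1 : ℕ)) - Real.log l by
          rw [← this]; apply Finset.sum_congr rfl; intro j _; push_cast; ring]
        have h1 : Real.log ((u + 1 : ℕ)) ≤ Real.log ((n:ℝ) * (1 + δ) + 1) := by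
          apply Real.log_le_log (by positivity)
          push_cast
          have := Nat.floor_le (le_of_lt (by nlinarith : (0:ℝ) < (n:ℝ) * (1 + δ)))
          simp only [← hu] at this; linarith
        have h2 : Real.log ((n:ℝ) * (1 - δ)) ≤ Real.log l :=
          Real.log_le_log hlo (Nat.le_ceil _)
        linarith

lemma key (ε δ : ℝ) (hε : 0 < ε) (hδ : 0 < δ) (hδ1 : δ < 1) :
    Filter.limsup
        (fun n => (volume.restrict (Set.Ico (0:ℝ) 1)) (Bad Xmod (fun _ => n) δ ε)) atTop
      ≤ ENNReal.ofReal (Real.log ((1 + δ) / (1 - δ))) := by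
  set g : ℕ → ENNReal := fun n =>
    ENNReal.ofReal (Real.log ((n:ℝ) * (1 + δ) + 1) - Real.log ((n:ℝ) * (1 - δ))) with hg
  have hev : ∀ᶠ n in atTop,
      (volume.restrict (Set.Ico (0:ℝ) 1)) (Bad Xmod (fun _ => n) δ ε) ≤ g n :=
    eventually_atTop.mpr ⟨1, fun n hn => bad_bound ε δ hε hδ hδ1 n hn⟩
  have hpos : (0:ℝ) < (1 + δ) / (1 - δ) := div_pos (by linarith) (by linarith)
  have h1 : Tendsto (fun n : ℕ => ((1 + δ) + 1 / (n:ℝ)) / (1 - δ)) atTop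
      (𝓝 ((1 + δ) / (1 - δ))) := by
    have := ((tendsto_const_nhds (x := (1 + δ))).add tendsto_one_div_atTop_nhds_zero_nat).div_const (1 - δ)
    simpa using this
  have h2 : Tendsto (fun n : ℕ => Real.log (((1 + δ) + 1 / (n:ℝ)) / (1 - δ))) atTop
      (𝓝 (Real.log ((1 + δ) / (1 - δ)))) :=
    ((Real.continuousAt_log (ne_of_gt hpos)).tendsto).comp h1
  have h3 : Tendsto (fun n : ℕ =>
      ENNReal.ofReal (Real.log (((1 + δ) + 1 / (n:ℝ)) / (1 - δ)))) atTop
      (𝓝 (ENNReal.ofReal (Real.log ((1 + δ) / (1 - δ))))) :=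
    (ENNReal.continuous_ofReal.tendsto _).comp h2
  have hgt : Tendsto g atTop (𝓝 (ENNReal.ofReal (Real.log ((1 + δ) / (1 - δ))))) := by
    apply h3.congr'
    filter_upwards [eventually_ge_atTop 1] with n hn
    have hnpos : (0:ℝ) < n := by exact_mod_cast hn
    have hlo : (0:ℝ) < (n:ℝ) * (1 - δ) := by nlinarith
    have hhi : (0:ℝ) < (n:ℝ) * (1 + δ) + 1 := by nlinarith
    simp only [hg]
    congr 1
    rw [← Real.log_div (ne_of_gt hhi) (ne_of_gt hlo)]
    congr 1
    field_simp
  calc Filter.limsup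
        (fun n => (volume.restrict (Set.Ico (0:ℝ) 1)) (Bad Xmod (fun _ => n) δ ε)) atTop
      ≤ Filter.limsup g atTop := limsup_le_limsup hev
    _ = ENNReal.ofReal (Real.log ((1 + δ) / (1 - δ))) := hgt.limsup_eq

/-- for the concrete counterexample sequence,
`limsup_n P(M_n(δ) > ε) ≤ log((1+δ)/(1-δ))`; in particular condition (c) holds. -/
theorem stmt10 :
    (∀ ε > (0:ℝ), ∀ δ : ℝ, 0 < δ → δ < 1 →
      Filter.limsup
        (fun n => (volume.restrict (Set.Ico (0:ℝ) 1)) (Bad Xmod (fun _ => n) δ ε)) atTop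
        ≤ ENNReal.ofReal (Real.log ((1 + δ) / (1 - δ)))) ∧
    FlucIdx (volume.restrict (Set.Ico (0:ℝ) 1)) Xmod (fun n _ => n) := by

  constructor
  · intro ε hε δ hδ hδ1
    exact key ε δ hε hδ hδ1
  · intro ε hε
    rw [show (0:ENNReal) = ⊥ from rfl, iInf_eq_bot]
    intro c hc
    rcases eq_or_ne c ⊤ with rfl | hct
    · exact ⟨⟨1/2, by norm_num⟩,
        lt_of_le_of_lt (key ε (1/2) hε (by norm_num) (by norm_num)) ENNReal.ofReal_lt_top⟩
    · have hc0 : 0 < c.toReal := ENNReal.toReal_pos (ne_of_gt hc) hct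
      have hcont : ContinuousAt (fun t : ℝ => Real.log ((1 + t) / (1 - t))) 0 := by
        apply ContinuousAt.log
        · exact (continuousAt_const.add continuousAt_id).div
            (continuousAt_const.sub continuousAt_id) (by norm_num)
        · norm_num
      have htend : Tendsto (fun t : ℝ => Real.log ((1 + t) / (1 - t))) (𝓝 0) (𝓝 0) := by
        have := hcont.tendsto
        simpa using this
      have hev : ∀ᶠ t in 𝓝 (0:ℝ),
          Real.log ((1 + t) / (1 - t)) < c.toReal ∧ t < 1 := by
        filter_upwards [htend.eventually_lt_const hc0, Iio_mem_nhds (by norm_num : (0:ℝ) < 1)]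
          with t h1 h2
        exact ⟨h1, h2⟩
      obtain ⟨δ, hδc, hδpos⟩ :=
        ((hev.filter_mono nhdsWithin_le_nhds).and
          (eventually_mem_nhdsWithin (s := Set.Ioi (0:ℝ)))).exists
      refine ⟨⟨δ, hδpos⟩, lt_of_le_of_lt (key ε δ hε hδpos hδc.2) ?_⟩
      calc ENNReal.ofReal (Real.log ((1 + δ) / (1 - δ)))
          < ENNReal.ofReal c.toReal := (ENNReal.ofReal_lt_ofReal_iff hc0).mpr hδc.1
        _ = c := ENNReal.ofReal_toReal hct
end

section
/- Let Z_n = U·V_n with U > 0 independent of the i.i.d. N(0,1) sequence (V_n), and X_n = (Σ_{i=1}^n Z_i)/√n. Suppose P(U > u) > 0 for all u > 0. Then for every δ ∈ (0, 1/2) there exists u > 0 and infinitely many n such that P(M_n(2δ) > 1/2 | U > u) ≥ 2·Φ(−1/(u·f(δ))), where f(δ) = 2√(2 − 2√(1−δ)) and Φ is the standard normal CDF; consequently, condition (c*) with respect to G = σ(U) fails: it is not true that for ε = 1/2 there exists δ > 0 with limsup_n P(M_n(δ) > 1/2 | H) < 1/2 for all H ∈ σ(U) with P(H) > 0. -/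
open MeasureTheory ProbabilityTheory Filter Real Topology Set

open scoped NNReal ENNReal

lemma pdf_conv_identity (a b : ℝ≥0) (ha : a ≠ 0) (hb : b ≠ 0) (z y : ℝ) :
    gaussianPDFReal 0 a (z - y) * gaussianPDFReal 0 b y
      = gaussianPDFReal 0 (a + b) z *
        gaussianPDFReal ((b : ℝ) * z / ((a : ℝ) + b)) (⟨(a : ℝ) * b / ((a : ℝ) + b), by positivity⟩) y := by
  have hA : (0:ℝ) < a := lt_of_le_of_ne (a.coe_nonneg) (by exact_mod_cast (Ne.symm ha))
  have hB : (0:ℝ) < b := lt_of_le_of_ne (b.coe_nonneg) (by exact_mod_cast (Ne.symm hb))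
  have hAB : (0:ℝ) < (a:ℝ) + b := by linarith
  simp only [gaussianPDFReal, NNReal.coe_mk, NNReal.coe_add, sub_zero]
  have hπ : (0:ℝ) < π := Real.pi_pos
  have hconst : (√(2 * π * a))⁻¹ * (√(2 * π * b))⁻¹
      = (√(2 * π * ((a:ℝ) + b)))⁻¹ * (√(2 * π * ((a:ℝ) * b / ((a:ℝ) + b))))⁻¹ := by
    rw [← mul_inv, ← mul_inv, ← Real.sqrt_mul (by positivity), ← Real.sqrt_mul (by positivity)]
    congr 1
    field_simp
  have hexp : rexp (-(z - y) ^ 2 / (2 * a)) * rexp (-y ^ 2 / (2 * b))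
      = rexp (-z ^ 2 / (2 * ((a:ℝ) + b))) *
        rexp (-(y - (b:ℝ) * z / ((a:ℝ) + b)) ^ 2 / (2 * ((a:ℝ) * b / ((a:ℝ) + b)))) := by
    rw [← Real.exp_add, ← Real.exp_add]
    congr 1
    field_simp
    ring
  calc (√(2 * π * a))⁻¹ * rexp (-(z - y) ^ 2 / (2 * a)) *
        ((√(2 * π * b))⁻¹ * rexp (-y ^ 2 / (2 * b)))
      = ((√(2 * π * a))⁻¹ * (√(2 * π * b))⁻¹) *
        (rexp (-(z - y) ^ 2 / (2 * a)) * rexp (-y ^ 2 / (2 * b))) := by ring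
    _ = _ := by
      rw [hconst, hexp]
      change _ = (√(2 * π * ((a:ℝ) + b)))⁻¹ * rexp (-z ^ 2 / (2 * ((a:ℝ) + b))) *
        ((√(2 * π * ((a:ℝ) * b / ((a:ℝ) + b))))⁻¹ *
          rexp (-(y - (b:ℝ) * z / ((a:ℝ) + b)) ^ 2 / (2 * ((a:ℝ) * b / ((a:ℝ) + b)))))
      ring

lemma gaussianReal_conv (a b : ℝ≥0) :
    (gaussianReal 0 a).conv (gaussianReal 0 b) = gaussianReal 0 (a + b) := by
  rcases eq_or_ne a 0 with rfl | ha
  · rw [gaussianReal_zero_var, Measure.dirac_zero_conv, zero_add]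
  rcases eq_or_ne b 0 with rfl | hb
  · rw [gaussianReal_zero_var, Measure.conv_dirac_zero, add_zero]
  have hab : a + b ≠ 0 := fun h => ha (add_eq_zero.mp h).1
  have hA : (0:ℝ) < a := lt_of_le_of_ne a.coe_nonneg (by exact_mod_cast Ne.symm ha)
  have hB : (0:ℝ) < b := lt_of_le_of_ne b.coe_nonneg (by exact_mod_cast Ne.symm hb)
  set m : ℝ := (b : ℝ) * 0 / ((a : ℝ) + b) with hm
  set c : ℝ≥0 := ⟨(a : ℝ) * b / ((a : ℝ) + b), by positivity⟩ with hc
  have hcne : c ≠ 0 := by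
    rw [← NNReal.coe_ne_zero]
    show (a:ℝ) * b / ((a:ℝ) + b) ≠ 0
    positivity
  set pdfA := gaussianPDF 0 a with hpdfA
  set pdfB := gaussianPDF 0 b with hpdfB
  have hmA : Measurable pdfA := measurable_gaussianPDF 0 a
  have hmB : Measurable pdfB := measurable_gaussianPDF 0 b
  ext s hs
  rw [Measure.conv, Measure.map_apply measurable_add hs,
    Measure.prod_apply (measurable_add hs)]
  set F : ℝ → ℝ≥0∞ := s.indicator 1 with hF
  have hmF : Measurable F := (measurable_indicator_const_iff 1).mpr hs
  have hinner : ∀ x : ℝ, gaussianReal 0 b (Prod.mk x ⁻¹' ((fun p : ℝ × ℝ => p.1 + p.2) ⁻¹' s))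
      = ∫⁻ y, F (x + y) * pdfB y := by
    intro x
    have hset : (Prod.mk x ⁻¹' ((fun p : ℝ × ℝ => p.1 + p.2) ⁻¹' s)) = {y | x + y ∈ s} := rfl
    rw [hset, gaussianReal_apply 0 hb _,
      ← lintegral_indicator (show MeasurableSet {y : ℝ | x + y ∈ s} from
        measurableSet_preimage (measurable_const_add x) hs) pdfB]
    congr 1 with y
    by_cases h : x + y ∈ s <;> simp [Set.indicator, h, hF]
  simp_rw [hinner]
  set g : ℝ → ℝ≥0∞ := fun x => ∫⁻ y, F (x + y) * pdfB y with hg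
  have hmg : Measurable g :=
    Measurable.lintegral_prod_right' (f := fun p : ℝ × ℝ => F (p.1 + p.2) * pdfB p.2)
      ((hmF.comp measurable_add).mul (hmB.comp measurable_snd))
  have h1 : (∫⁻ x, g x ∂(gaussianReal 0 a)) = ∫⁻ x, pdfA x * g x := by
    rw [gaussianReal_of_var_ne_zero 0 ha, lintegral_withDensity_eq_lintegral_mul _ hmA hmg]
    rfl
  have h2 : ∀ x : ℝ, pdfA x * g x = ∫⁻ y, pdfA x * (F (x + y) * pdfB y) := fun x =>
    (lintegral_const_mul (pdfA x) ((hmF.comp (measurable_const_add x)).mul hmB)).symm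
  have hmG : Measurable (Function.uncurry fun x y : ℝ => pdfA x * (F (x + y) * pdfB y)) :=
    (hmA.comp measurable_fst).mul ((hmF.comp measurable_add).mul (hmB.comp measurable_snd))
  have h2b : ∀ x : ℝ, (∫⁻ y, pdfA x * (F (x + y) * pdfB y))
      = ∫⁻ z, pdfA x * (F z * pdfB (z - x)) := by
    intro x
    rw [← lintegral_add_right_eq_self (fun z => pdfA x * (F z * pdfB (z - x))) x]
    exact lintegral_congr fun y => by rw [add_sub_cancel_right, add_comm]
  have hmG : Measurable (Function.uncurry fun x z : ℝ => pdfA x * (F z * pdfB (z - x))) :=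
    (hmA.comp measurable_fst).mul ((hmF.comp measurable_snd).mul
      (hmB.comp (measurable_snd.sub measurable_fst)))
  have h3 : (∫⁻ x, ∫⁻ z, pdfA x * (F z * pdfB (z - x))) =
      ∫⁻ z, ∫⁻ x, pdfA x * (F z * pdfB (z - x)) :=
    lintegral_lintegral_swap hmG.aemeasurable
  have h5 : ∀ z x : ℝ, pdfA x * (F z * pdfB (z - x))
      = F z * gaussianPDF 0 (a + b) z * gaussianPDF ((a : ℝ) * z / ((b : ℝ) + a)) c x := by
    intro z x
    have hid := pdf_conv_identity b a hb ha z x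
    have hc' : (⟨(b : ℝ) * a / ((b : ℝ) + a), by positivity⟩ : ℝ≥0) = c := by
      rw [hc]; ext; simp only [NNReal.coe_mk]; ring
    rw [hpdfA, hpdfB, gaussianPDF, gaussianPDF, gaussianPDF, gaussianPDF]
    calc ENNReal.ofReal (gaussianPDFReal 0 a x) *
          (F z * ENNReal.ofReal (gaussianPDFReal 0 b (z - x)))
        = F z * ENNReal.ofReal (gaussianPDFReal 0 b (z - x) * gaussianPDFReal 0 a x) := by
          rw [ENNReal.ofReal_mul (gaussianPDFReal_nonneg _ _ _)]; ring
      _ = _ := by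
          rw [hid, ENNReal.ofReal_mul (gaussianPDFReal_nonneg _ _ _), hc', add_comm b a]; ring
  have h6 : ∀ z : ℝ, (∫⁻ x, pdfA x * (F z * pdfB (z - x)))
      = F z * gaussianPDF 0 (a + b) z := by
    intro z
    calc (∫⁻ x, pdfA x * (F z * pdfB (z - x)))
        = ∫⁻ x, F z * gaussianPDF 0 (a + b) z *
            gaussianPDF ((a : ℝ) * z / ((b : ℝ) + a)) c x := lintegral_congr fun x => h5 z x
      _ = F z * gaussianPDF 0 (a + b) z * ∫⁻ x, gaussianPDF ((a : ℝ) * z / ((b : ℝ) + a)) c x :=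
          lintegral_const_mul _ (measurable_gaussianPDF _ c)
      _ = F z * gaussianPDF 0 (a + b) z := by
          rw [lintegral_gaussianPDF_eq_one _ hcne, mul_one]
  calc (∫⁻ x, g x ∂(gaussianReal 0 a))
      = ∫⁻ x, pdfA x * g x := h1
    _ = ∫⁻ x, ∫⁻ y, pdfA x * (F (x + y) * pdfB y) := lintegral_congr h2
    _ = ∫⁻ x, ∫⁻ z, pdfA x * (F z * pdfB (z - x)) := lintegral_congr h2b
    _ = ∫⁻ z, ∫⁻ x, pdfA x * (F z * pdfB (z - x)) := h3
    _ = ∫⁻ z, F z * gaussianPDF 0 (a + b) z := lintegral_congr h6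
    _ = ∫⁻ z, s.indicator (gaussianPDF 0 (a + b)) z := by
        refine lintegral_congr fun z => ?_
        by_cases h : z ∈ s <;> simp [Set.indicator, h, hF]
    _ = ∫⁻ z in s, gaussianPDF 0 (a + b) z := lintegral_indicator hs _
    _ = gaussianReal 0 (a + b) s := (gaussianReal_apply 0 hab s).symm

open Filter in
lemma map_add_of_indepFun {Ω : Type*} {mΩ : MeasurableSpace Ω} (P : Measure Ω)
    [IsProbabilityMeasure P] {X Y : Ω → ℝ} (hX : Measurable X) (hY : Measurable Y)
    (h : ProbabilityTheory.IndepFun X Y P) :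
    Measure.map (fun ω => X ω + Y ω) P = (Measure.map X P).conv (Measure.map Y P) := by
  have hpair : Measure.map (fun ω => (X ω, Y ω)) P
      = (Measure.map X P).prod (Measure.map Y P) :=
    (ProbabilityTheory.indepFun_iff_map_prod_eq_prod_map_map hX.aemeasurable
      hY.aemeasurable).mp h
  rw [Measure.conv, ← hpair, Measure.map_map measurable_add (hX.prodMk hY)]
  rfl

lemma map_sum_gaussian {Ω : Type*} {mΩ : MeasurableSpace Ω} (P : Measure Ω)
    [IsProbabilityMeasure P] (W : ℕ → Ω → ℝ) (hmeas : ∀ i, Measurable (W i))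
    (hindep : ProbabilityTheory.iIndepFun W P) (v : ℕ → ℝ≥0)
    (hW : ∀ i, Measure.map (W i) P = gaussianReal 0 (v i)) (s : Finset ℕ) :
    Measure.map (fun ω => ∑ i ∈ s, W i ω) P = gaussianReal 0 (∑ i ∈ s, v i) := by
  classical
  induction s using Finset.induction_on with
  | empty =>
      simp only [Finset.sum_empty]
      rw [Measure.map_const, gaussianReal_zero_var]
      simp
  | insert j t hi ih =>
      have hsum_meas : Measurable (fun ω => ∑ i ∈ t, W i ω) := by
        exact Finset.measurable_sum t fun i _ => hmeas i
      have hind : ProbabilityTheory.IndepFun (fun ω => ∑ i ∈ t, W i ω) (W j) P := by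
        have h := hindep.indepFun_finsetSum_of_notMem hmeas hi
        have he : (∑ i ∈ t, W i) = fun ω => ∑ i ∈ t, W i ω := by
          ext ω; simp [Finset.sum_apply]
        rwa [he] at h
      have hrw : (fun ω => ∑ i ∈ insert j t, W i ω) = fun ω => W j ω + ∑ i ∈ t, W i ω := by
        ext ω; rw [Finset.sum_insert hi]
      rw [hrw]
      have : Measure.map (fun ω => W j ω + ∑ i ∈ t, W i ω) P
          = (Measure.map (W j) P).conv (Measure.map (fun ω => ∑ i ∈ t, W i ω) P) :=
        map_add_of_indepFun P (hmeas j) hsum_meas hind.symm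
      rw [this, hW j, ih, gaussianReal_conv, Finset.sum_insert hi]

lemma gaussianReal_map_neg (v : ℝ≥0) :
    Measure.map (fun x : ℝ => -x) (gaussianReal 0 v) = gaussianReal 0 v := by
  have h : (fun x : ℝ => -x) = fun x : ℝ => (-1 : ℝ) * x := by ext x; ring
  rw [h]
  have := gaussianReal_map_const_mul (μ := 0) (v := v) (-1 : ℝ)
  rw [show ((fun x : ℝ => (-1:ℝ) * x)) = ((-1 : ℝ) * ·) from rfl, this]
  have h2 : (NNReal.mk ((-1:ℝ)^2) (sq_nonneg (-1:ℝ))) = 1 := by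
    ext; norm_num
  rw [h2, one_mul]
  norm_num

lemma gaussianReal_singleton (v : ℝ≥0) (hv : v ≠ 0) (t : ℝ) :
    gaussianReal 0 v {t} = 0 :=
  gaussianReal_absolutelyContinuous 0 hv (volume_singleton)

lemma gaussianReal_Iio_eq_Iic (v : ℝ≥0) (hv : v ≠ 0) (t : ℝ) :
    gaussianReal 0 v (Iio t) = gaussianReal 0 v (Iic t) := by
  apply le_antisymm (measure_mono Iio_subset_Iic_self)
  calc gaussianReal 0 v (Iic t) ≤ gaussianReal 0 v (Iio t ∪ {t}) := by
        apply measure_mono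
        intro x hx
        simp only [Set.mem_Iic] at hx
        rcases lt_or_eq_of_le hx with h | h
        · exact Or.inl h
        · exact Or.inr h
    _ ≤ gaussianReal 0 v (Iio t) + gaussianReal 0 v {t} := measure_union_le _ _
    _ = gaussianReal 0 v (Iio t) := by rw [gaussianReal_singleton v hv, add_zero]

lemma gaussianReal_Iio_scale (v : ℝ≥0) (hv : v ≠ 0) (t : ℝ) :
    gaussianReal 0 v (Iio t)
      = ENNReal.ofReal (ProbabilityTheory.cdf (gaussianReal 0 1) (t / Real.sqrt v)) := by
  have hv' : 0 < v := lt_of_le_of_ne (zero_le) (Ne.symm hv)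
  have hσ : (0:ℝ) < Real.sqrt v := Real.sqrt_pos.mpr (by exact_mod_cast hv')
  have hmap : Measure.map (fun x : ℝ => Real.sqrt v * x) (gaussianReal 0 1) = gaussianReal 0 v := by
    have := gaussianReal_map_const_mul (μ := 0) (v := 1) (Real.sqrt v)
    rw [show ((fun x : ℝ => Real.sqrt v * x)) = ((Real.sqrt v : ℝ) * ·) from rfl, this]
    have h2 : (NNReal.mk ((Real.sqrt v)^2) (sq_nonneg _)) * 1 = v := by
      ext; simp only [NNReal.coe_mul, NNReal.coe_mk, NNReal.coe_one, mul_one]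
      exact Real.sq_sqrt v.coe_nonneg
    rw [h2]
    norm_num
  rw [← hmap, Measure.map_apply (measurable_const_mul _) measurableSet_Iio]
  have hpre : (fun x : ℝ => Real.sqrt v * x) ⁻¹' Iio t = Iio (t / Real.sqrt v) := by
    ext x
    simp only [mem_preimage, mem_Iio]
    rw [lt_div_iff₀ hσ, mul_comm]
  rw [hpre, gaussianReal_Iio_eq_Iic 1 one_ne_zero, ProbabilityTheory.cdf_eq_real, measureReal_def,
    ENNReal.ofReal_toReal (measure_ne_top _ _)]

lemma gaussian_tail (v : ℝ≥0) (hv : v ≠ 0) (c : ℝ) (hc : 0 < c) (t0 : ℝ)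
    (ht : t0 ≤ -c / Real.sqrt v) :
    ENNReal.ofReal (2 * ProbabilityTheory.cdf (gaussianReal 0 1) t0)
      ≤ gaussianReal 0 v {x : ℝ | c < |x|} := by
  have hset : {x : ℝ | c < |x|} = Iio (-c) ∪ Ioi c := by
    ext x
    simp only [mem_setOf_eq, mem_union, mem_Iio, mem_Ioi, lt_abs, lt_neg]
    tauto
  have hdisj : Disjoint (Iio (-c)) (Ioi c) := by
    apply Set.disjoint_left.mpr
    intro x hx hx'
    simp only [mem_Iio, mem_Ioi] at *
    linarith
  have hIoi : gaussianReal 0 v (Ioi c) = gaussianReal 0 v (Iio (-c)) := by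
    conv_lhs => rw [← gaussianReal_map_neg v]
    rw [Measure.map_apply measurable_neg measurableSet_Ioi]
    congr 1
    ext x
    simp only [mem_preimage, mem_Ioi, mem_Iio]
    constructor <;> intro h <;> linarith
  rw [hset, measure_union hdisj measurableSet_Ioi, hIoi, ← two_mul,
    gaussianReal_Iio_scale v hv]
  have hmono : ProbabilityTheory.cdf (gaussianReal 0 1) t0
      ≤ ProbabilityTheory.cdf (gaussianReal 0 1) (-c / Real.sqrt v) :=
    (ProbabilityTheory.cdf (gaussianReal 0 1)).mono ht
  have hnn : 0 ≤ ProbabilityTheory.cdf (gaussianReal 0 1) t0 := by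
    rw [ProbabilityTheory.cdf_eq_real, measureReal_def]; positivity
  calc ENNReal.ofReal (2 * ProbabilityTheory.cdf (gaussianReal 0 1) t0)
      = 2 * ENNReal.ofReal (ProbabilityTheory.cdf (gaussianReal 0 1) t0) := by
        rw [ENNReal.ofReal_mul (by norm_num)]; norm_num
    _ ≤ 2 * ENNReal.ofReal (ProbabilityTheory.cdf (gaussianReal 0 1) (-c / Real.sqrt v)) :=
        mul_le_mul_right (ENNReal.ofReal_le_ofReal hmono) 2

open Filter ProbabilityTheory in
lemma key_s13 {Ω : Type*} [mΩ : MeasurableSpace Ω] (P : Measure Ω) [IsProbabilityMeasure P]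
    (U : Ω → ℝ) (V : ℕ → Ω → ℝ)
    (hU : ∀ ω, 0 < U ω) (hUmeas : Measurable U)
    (hmeas : ∀ i, Measurable (V i))
    (hindep : iIndepFun V P)
    (hgauss : ∀ i, Measure.map (V i) P = gaussianReal 0 1)
    (hUV : IndepFun U (fun ω i => V i ω) P)
    (X : ℕ → Ω → ℝ)
    (hX : ∀ n ω, X n ω = (∑ i ∈ Finset.Icc 1 n, U ω * V i ω) / Real.sqrt n)
    (δ u : ℝ) (hδ0 : 0 < δ) (hδ2 : δ < 1/2) (hu : 0 < u)
    (hUpos : 0 < P {ω | u < U ω})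
    (n : ℕ) (hn2 : 2 ≤ n) (hnδ : 1 ≤ δ * n) :
    ENNReal.ofReal (2 * ProbabilityTheory.cdf (gaussianReal 0 1)
        (-(1 / (u * (2 * Real.sqrt (2 - 2 * Real.sqrt (1 - δ)))))))
      ≤ P (Bad X (fun _ => n) (2 * δ) (1/2) ∩ {ω | u < U ω}) / P {ω | u < U ω} := by
  classical
  have hδ1 : (0:ℝ) < 1 - δ := by linarith
  have hn0 : (0:ℝ) < n := by positivity
  set m : ℕ := ⌊(1 - δ) * (n:ℝ)⌋₊ with hmdef
  have hm1 : 1 ≤ m := by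
    apply Nat.le_floor
    have h2n : (2:ℝ) ≤ n := by exact_mod_cast hn2
    push_cast
    nlinarith
  have hmle : (m:ℝ) ≤ (1 - δ) * n := Nat.floor_le (by positivity)
  have hmlt : m < n := by
    have : (m:ℝ) < n := by nlinarith
    exact_mod_cast this
  have hgap : (n:ℝ) - m ≤ 2 * δ * n := by
    have h1 : (1 - δ) * n - 1 < m := Nat.sub_one_lt_floor _
    nlinarith
  have hm0 : (0:ℝ) < m := by exact_mod_cast hm1
  set sqm := Real.sqrt m with hsqm
  set sqn := Real.sqrt n with hsqn
  have hsqm0 : 0 < sqm := Real.sqrt_pos.mpr hm0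
  have hsqn0 : 0 < sqn := Real.sqrt_pos.mpr hn0
  have hsqmn : sqm < sqn := Real.sqrt_lt_sqrt (le_of_lt hm0) (by exact_mod_cast hmlt)
  have hsqm_sq : sqm ^ 2 = (m:ℝ) := Real.sq_sqrt (le_of_lt hm0)
  have hsqn_sq : sqn ^ 2 = (n:ℝ) := Real.sq_sqrt (le_of_lt hn0)
  set a : ℕ → ℝ := fun i => (if i ≤ m then sqm⁻¹ else 0) - sqn⁻¹ with ha
  set W : Ω → ℝ := fun ω => ∑ i ∈ Finset.Icc 1 n, a i * V i ω with hW
  have hWmeas : Measurable W :=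
    Finset.measurable_sum _ fun i _ => (hmeas i).const_mul _
  -- law of W
  set va : ℕ → ℝ≥0 := fun i => ⟨(a i)^2, sq_nonneg _⟩ with hva
  have hfam_indep : iIndepFun (fun i ω => a i * V i ω) P :=
    hindep.comp (fun i x => a i * x) (fun i => measurable_const_mul _)
  have hfam_law : ∀ i, Measure.map (fun ω => a i * V i ω) P = gaussianReal 0 (va i) := by
    intro i
    have : (fun ω => a i * V i ω) = (fun x => a i * x) ∘ V i := rfl
    rw [this, ← Measure.map_map (measurable_const_mul _) (hmeas i), hgauss i,
      show ((fun x : ℝ => a i * x)) = ((a i) * ·) from rfl, gaussianReal_map_const_mul]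
    rw [mul_zero, mul_one]
    rfl
  set v : ℝ≥0 := ∑ i ∈ Finset.Icc 1 n, va i with hv
  have hlaw : Measure.map W P = gaussianReal 0 v :=
    map_sum_gaussian P (fun i ω => a i * V i ω)
      (fun i => (hmeas i).const_mul _) hfam_indep va hfam_law _
  -- value of the variance
  have hIcc : Finset.Icc 1 n = Finset.Ioc 0 n := by rw [← Finset.Icc_add_one_left_eq_Ioc]; rfl
  have hIccm : Finset.Icc 1 m = Finset.Ioc 0 m := by rw [← Finset.Icc_add_one_left_eq_Ioc]; rfl
  have hvcoe : (v:ℝ) = 2 - 2 * (sqm / sqn) := by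
    have hsplit : ∑ i ∈ Finset.Ioc 0 m, (a i)^2 + ∑ i ∈ Finset.Ioc m n, (a i)^2
        = ∑ i ∈ Finset.Ioc 0 n, (a i)^2 :=
      Finset.sum_Ioc_consecutive _ (Nat.zero_le m) (le_of_lt hmlt)
    have h1 : ∑ i ∈ Finset.Ioc 0 m, (a i)^2 = m * (sqm⁻¹ - sqn⁻¹)^2 := by
      have hcst : ∀ i ∈ Finset.Ioc 0 m, (a i)^2 = (sqm⁻¹ - sqn⁻¹)^2 := by
        intro i hi
        simp only [Finset.mem_Ioc] at hi
        simp only [ha, if_pos hi.2]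
      rw [Finset.sum_congr rfl hcst, Finset.sum_const, Nat.card_Ioc, nsmul_eq_mul]
      simp
    have h2 : ∑ i ∈ Finset.Ioc m n, (a i)^2 = ((n:ℝ) - m) * (sqn⁻¹)^2 := by
      have hcst : ∀ i ∈ Finset.Ioc m n, (a i)^2 = (sqn⁻¹)^2 := by
        intro i hi
        simp only [Finset.mem_Ioc] at hi
        simp only [ha, if_neg (by omega : ¬ i ≤ m), zero_sub, neg_sq]
      rw [Finset.sum_congr rfl hcst, Finset.sum_const, Nat.card_Ioc, nsmul_eq_mul,
        Nat.cast_sub (le_of_lt hmlt)]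
    have hvs : (v:ℝ) = ∑ i ∈ Finset.Icc 1 n, (a i)^2 := by
      rw [hv, NNReal.coe_sum]
      exact Finset.sum_congr rfl fun i _ => rfl
    rw [hvs, hIcc, ← hsplit, h1, h2, ← hsqm_sq, ← hsqn_sq]
    field_simp
    ring
  have hsqd : Real.sqrt (1 - δ) < 1 := by
    have := Real.sqrt_lt_sqrt (by linarith : (0:ℝ) ≤ 1 - δ) (by linarith : 1 - δ < 1)
    simpa using this
  have hvpos : (0:ℝ) < 2 - 2 * Real.sqrt (1 - δ) := by linarith
  have hvlb : 2 - 2 * Real.sqrt (1 - δ) ≤ (v:ℝ) := by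
    rw [hvcoe]
    have : sqm ≤ Real.sqrt (1 - δ) * sqn := by
      rw [hsqm, hsqn, ← Real.sqrt_mul (by linarith)]
      exact Real.sqrt_le_sqrt hmle
    have h2 : sqm / sqn ≤ Real.sqrt (1 - δ) := by
      rw [div_le_iff₀ hsqn0]
      exact this
    linarith
  have hvne : v ≠ 0 := by
    intro h
    rw [h] at hvcoe
    simp only [NNReal.coe_zero] at hvcoe
    have : sqm / sqn < 1 := (div_lt_one hsqn0).mpr hsqmn
    linarith
  have hsqv : Real.sqrt (2 - 2 * Real.sqrt (1 - δ)) ≤ Real.sqrt v :=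
    Real.sqrt_le_sqrt hvlb
  have hsqvpos : 0 < Real.sqrt v := lt_of_lt_of_le (Real.sqrt_pos.mpr hvpos) hsqv
  set c : ℝ := 1 / (2 * u) with hc
  have hc0 : 0 < c := by rw [hc]; positivity
  set f0 : ℝ := 2 * Real.sqrt (2 - 2 * Real.sqrt (1 - δ)) with hf0
  have hf00 : 0 < f0 := by rw [hf0]; positivity
  set t0 : ℝ := -(1 / (u * f0)) with ht0
  have ht : t0 ≤ -c / Real.sqrt v := by
    rw [ht0, hc, neg_div, neg_le_neg_iff, div_div]
    apply one_div_le_one_div_of_le (by positivity)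
    rw [hf0]
    nlinarith
  set S : Set ℝ := {x | c < |x|} with hS
  have hSmeas : MeasurableSet S := measurableSet_lt measurable_const measurable_abs
  set E : Set Ω := W ⁻¹' S with hE
  have hPE : ENNReal.ofReal (2 * ProbabilityTheory.cdf (gaussianReal 0 1) t0) ≤ P E := by
    have : P E = gaussianReal 0 v S := by
      rw [hE, ← Measure.map_apply hWmeas hSmeas, hlaw]
    rw [this]
    exact gaussian_tail v hvne c hc0 t0 ht
  -- independence of W and U
  have hWU : IndepFun W U P := by
    set g : (ℕ → ℝ) → ℝ := fun p => ∑ i ∈ Finset.Icc 1 n, a i * p i with hg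
    have hgm : Measurable g :=
      Finset.measurable_sum _ fun i _ => (measurable_pi_apply i).const_mul _
    exact (hUV.comp measurable_id hgm).symm
  have hprod : P (E ∩ {ω | u < U ω}) = P E * P {ω | u < U ω} := by
    have := hWU.measure_inter_preimage_eq_mul S (Ioi u) hSmeas measurableSet_Ioi
    exact this
  -- the inclusion into the Bad event
  have hdiff : ∀ ω, X m ω - X n ω = U ω * W ω := by
    intro ω
    have hXk : ∀ k : ℕ, X k ω = U ω * ((∑ i ∈ Finset.Icc 1 k, V i ω) * (Real.sqrt k)⁻¹) := by
      intro k
      rw [hX, ← Finset.mul_sum, div_eq_mul_inv]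
      ring
    have hWval : W ω = (∑ i ∈ Finset.Icc 1 m, V i ω) * sqm⁻¹
        - (∑ i ∈ Finset.Icc 1 n, V i ω) * sqn⁻¹ := by
      rw [hW]
      simp only [ha, sub_mul]
      rw [Finset.sum_sub_distrib]
      congr 1
      · rw [← Finset.sum_subset (Finset.Icc_subset_Icc_right (le_of_lt hmlt))
          (fun i hi hni => by
            simp only [Finset.mem_Icc] at hi hni
            rw [if_neg (by omega), zero_mul])]
        rw [Finset.sum_congr rfl (fun i hi => by
          simp only [Finset.mem_Icc] at hi
          rw [if_pos hi.2]), Finset.sum_mul]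
        exact Finset.sum_congr rfl fun i _ => mul_comm _ _
      · rw [Finset.sum_mul]
        exact Finset.sum_congr rfl fun i _ => mul_comm _ _
    rw [hXk m, hXk n, hWval, ← hsqm, ← hsqn]
    ring
  have hsub : E ∩ {ω | u < U ω} ⊆ Bad X (fun _ => n) (2 * δ) (1/2) ∩ {ω | u < U ω} := by
    rintro ω ⟨hEω, hUω⟩
    refine ⟨⟨m, ?_, ?_⟩, hUω⟩
    · rw [abs_of_nonneg (by
        rw [sub_nonneg]
        exact_mod_cast le_of_lt hmlt)]
      calc (n:ℝ) - m ≤ 2 * δ * n := hgap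
        _ = (n:ℝ) * (2 * δ) := by ring
    · have hWω : c < |W ω| := hEω
      have hUu : u < U ω := hUω
      rw [Real.dist_eq, hdiff ω, abs_mul, abs_of_pos (hU ω)]
      calc (1:ℝ)/2 = u * c := by rw [hc]; field_simp
        _ < U ω * |W ω| := mul_lt_mul'' hUu hWω (le_of_lt hu) (le_of_lt hc0)
  -- put everything together
  calc ENNReal.ofReal (2 * ProbabilityTheory.cdf (gaussianReal 0 1) t0)
      ≤ P E := hPE
    _ = P E * P {ω | u < U ω} / P {ω | u < U ω} :=
        ((ENNReal.eq_div_iff hUpos.ne' (measure_ne_top P _)).mpr (mul_comm _ _))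
    _ = P (E ∩ {ω | u < U ω}) / P {ω | u < U ω} := by rw [hprod]
    _ ≤ P (Bad X (fun _ => n) (2 * δ) (1/2) ∩ {ω | u < U ω}) / P {ω | u < U ω} :=
        ENNReal.div_le_div_right (measure_mono hsub) _


/-- in the exchangeable CLT example `Z_n = U·V_n`, the conditional
probability bound `P(M_n(2δ) > 1/2 | U > u) ≥ 2Φ(−1/(u f(δ)))` holds for infinitely
many `n`, and consequently condition (c*) with respect to `G = σ(U)` fails. -/
theorem stmt13 {Ω : Type*} [mΩ : MeasurableSpace Ω] (P : Measure Ω) [IsProbabilityMeasure P]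
    (U : Ω → ℝ) (V : ℕ → Ω → ℝ)
    (hU : ∀ ω, 0 < U ω) (hUmeas : Measurable U)
    (hU2 : Integrable (fun ω => U ω ^ 2) P)
    (hUtail : ∀ u > (0:ℝ), 0 < P {ω | u < U ω})
    (hmeas : ∀ i, Measurable (V i))
    (hindep : iIndepFun V P)
    (hgauss : ∀ i, Measure.map (V i) P = gaussianReal 0 1)
    (hUV : IndepFun U (fun ω i => V i ω) P)
    (X : ℕ → Ω → ℝ)
    (hX : ∀ n ω, X n ω = (∑ i ∈ Finset.Icc 1 n, U ω * V i ω) / Real.sqrt n) :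
    (∀ δ : ℝ, 0 < δ → δ < 1/2 → ∃ u > (0:ℝ), ∃ᶠ n in atTop,
        ENNReal.ofReal (2 * ProbabilityTheory.cdf (gaussianReal 0 1)
            (-(1 / (u * (2 * Real.sqrt (2 - 2 * Real.sqrt (1 - δ)))))))
          ≤ P (Bad X (fun _ => n) (2 * δ) (1/2) ∩ {ω | u < U ω}) / P {ω | u < U ω}) ∧
    ¬ (∃ δ > (0:ℝ), ∀ H : Set Ω,
        MeasurableSet[MeasurableSpace.comap U inferInstance] H → 0 < P H →
        Filter.limsup (fun n => P (Bad X (fun _ => n) δ (1/2) ∩ H) / P H) atTop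
          < ENNReal.ofReal (1/2)) := by
  have hBadMono : ∀ (n : ℕ) (δ₁ δ₂ ε : ℝ), δ₁ ≤ δ₂ →
      Bad X (fun _ => n) δ₁ ε ⊆ Bad X (fun _ => n) δ₂ ε := by
    rintro n δ₁ δ₂ ε h ω ⟨j, hj, hd⟩
    exact ⟨j, hj.trans (mul_le_mul_of_nonneg_left h (Nat.cast_nonneg n)), hd⟩
  have hkey : ∀ δ u : ℝ, 0 < δ → δ < 1/2 → 0 < u →
      ∃ᶠ n in atTop, ENNReal.ofReal (2 * ProbabilityTheory.cdf (gaussianReal 0 1)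
          (-(1 / (u * (2 * Real.sqrt (2 - 2 * Real.sqrt (1 - δ)))))))
        ≤ P (Bad X (fun _ => n) (2 * δ) (1/2) ∩ {ω | u < U ω}) / P {ω | u < U ω} := by
    intro δ u hδ0 hδ2 hu
    apply Filter.Eventually.frequently
    filter_upwards [eventually_ge_atTop 2, eventually_ge_atTop ⌈1/δ⌉₊] with n hn2 hnd
    apply key_s13 P U V hU hUmeas hmeas hindep hgauss hUV X hX δ u hδ0 hδ2 hu (hUtail u hu) n hn2
    have h1 : (1:ℝ)/δ ≤ n := le_trans (Nat.le_ceil _) (by exact_mod_cast hnd)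
    rw [mul_comm]
    exact (div_le_iff₀ hδ0).mp h1
  constructor
  · intro δ hδ0 hδ2
    exact ⟨1, one_pos, hkey δ 1 hδ0 hδ2 one_pos⟩
  · rintro ⟨δ, hδ0, hall⟩
    set δ' : ℝ := min δ 1 / 4 with hδ'
    have hmin : 0 < min δ 1 := lt_min hδ0 one_pos
    have hδ'0 : 0 < δ' := by rw [hδ']; positivity
    have hδ'2 : δ' < 1/2 := by
      have := min_le_right δ 1
      rw [hδ']; linarith
    have h2δ' : 2 * δ' ≤ δ := by
      have := min_le_left δ 1
      rw [hδ']; linarith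
    -- find k with 1/4 ≤ Φ(-1/(k+1))
    have hmono : Monotone (fun k : ℕ => Iic (-(1 / ((k:ℝ) + 1)))) := by
      intro k l hkl
      apply Iic_subset_Iic.mpr
      have : (1:ℝ) / ((l:ℝ) + 1) ≤ 1 / ((k:ℝ) + 1) :=
        one_div_le_one_div_of_le (by positivity) (by exact_mod_cast Nat.succ_le_succ hkl)
      linarith
    have hunion : (⋃ k : ℕ, Iic (-(1 / ((k:ℝ) + 1)))) = Iio (0:ℝ) := by
      ext x
      simp only [mem_iUnion, mem_Iic, mem_Iio]
      constructor
      · rintro ⟨k, hk⟩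
        have : (0:ℝ) < 1 / ((k:ℝ) + 1) := by positivity
        linarith
      · intro hx
        obtain ⟨k, hk⟩ := exists_nat_one_div_lt (show (0:ℝ) < -x by linarith)
        exact ⟨k, by linarith⟩
    have hIio : gaussianReal 0 1 (Iio (0:ℝ)) + gaussianReal 0 1 (Ici (0:ℝ)) = 1 := by
      have h := measure_add_measure_compl (μ := gaussianReal 0 1)
        (measurableSet_Iio (a := (0:ℝ)))
      rwa [compl_Iio, measure_univ] at h
    have hIci : gaussianReal 0 1 (Ici (0:ℝ)) = gaussianReal 0 1 (Iio (0:ℝ)) := by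
      conv_lhs => rw [← gaussianReal_map_neg 1]
      rw [Measure.map_apply measurable_neg measurableSet_Ici]
      have : (fun x : ℝ => -x) ⁻¹' Ici 0 = Iic 0 := by
        ext x; simp only [mem_preimage, mem_Ici, mem_Iic]; constructor <;> intro <;> linarith
      rw [this, gaussianReal_Iio_eq_Iic 1 one_ne_zero]
    have hquarter : ENNReal.ofReal (1/4) < gaussianReal 0 1 (Iio (0:ℝ)) := by
      by_contra h
      push_neg at h
      have h1 : (1:ℝ≥0∞) ≤ ENNReal.ofReal (1/4) + ENNReal.ofReal (1/4) := by
        calc (1:ℝ≥0∞) = gaussianReal 0 1 (Iio (0:ℝ)) + gaussianReal 0 1 (Ici (0:ℝ)) := hIio.symm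
          _ = gaussianReal 0 1 (Iio (0:ℝ)) + gaussianReal 0 1 (Iio (0:ℝ)) := by rw [hIci]
          _ ≤ _ := add_le_add h h
      rw [← ENNReal.ofReal_add (by norm_num) (by norm_num)] at h1
      have : ENNReal.ofReal (1/4 + 1/4) < 1 := ENNReal.ofReal_lt_one.mpr (by norm_num)
      exact absurd h1 (not_le.mpr this)
    have htends := tendsto_measure_iUnion_atTop (μ := gaussianReal 0 1) hmono
    rw [hunion] at htends
    obtain ⟨k, hk⟩ := (htends.eventually (eventually_gt_nhds hquarter)).exists
    have hΦk : (1:ℝ)/4 ≤ ProbabilityTheory.cdf (gaussianReal 0 1) (-(1 / ((k:ℝ) + 1))) := by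
      rw [ProbabilityTheory.cdf_eq_real, measureReal_def]
      have := ENNReal.toReal_mono (measure_ne_top _ _) (le_of_lt hk)
      rwa [ENNReal.toReal_ofReal (by norm_num)] at this
    set f0 : ℝ := 2 * Real.sqrt (2 - 2 * Real.sqrt (1 - δ')) with hf0
    have hsqd : Real.sqrt (1 - δ') < 1 := by
      have := Real.sqrt_lt_sqrt (by linarith : (0:ℝ) ≤ 1 - δ') (by linarith : 1 - δ' < 1)
      simpa using this
    have hf00 : 0 < f0 := by
      rw [hf0]
      have : (0:ℝ) < 2 - 2 * Real.sqrt (1 - δ') := by linarith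
      positivity
    set u : ℝ := max (((k:ℝ) + 1) / f0) 1 with hudef
    have hu : 0 < u := lt_of_lt_of_le one_pos (le_max_right _ _)
    have hufo : (k:ℝ) + 1 ≤ u * f0 := by
      have h1 : ((k:ℝ) + 1) / f0 * f0 ≤ u * f0 :=
        mul_le_mul_of_nonneg_right (le_max_left _ _) (le_of_lt hf00)
      rwa [div_mul_cancel₀ _ (ne_of_gt hf00)] at h1
    have hΦu : (1:ℝ)/4 ≤ ProbabilityTheory.cdf (gaussianReal 0 1) (-(1 / (u * f0))) := by
      refine le_trans hΦk ((ProbabilityTheory.cdf (gaussianReal 0 1)).mono ?_)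
      have h1 : (0:ℝ) < (k:ℝ) + 1 := by positivity
      have h2 : (1:ℝ) / (u * f0) ≤ 1 / ((k:ℝ) + 1) := one_div_le_one_div_of_le h1 hufo
      linarith
    have hbound : ENNReal.ofReal (1/2)
        ≤ ENNReal.ofReal (2 * ProbabilityTheory.cdf (gaussianReal 0 1) (-(1 / (u * f0)))) :=
      ENNReal.ofReal_le_ofReal (by linarith)
    set H : Set Ω := {ω | u < U ω} with hH
    have hHmeas : MeasurableSet[MeasurableSpace.comap U inferInstance] H :=
      ⟨Ioi u, measurableSet_Ioi, rfl⟩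
    have hHpos : 0 < P H := hUtail u hu
    have hfreq := hkey δ' u hδ'0 hδ'2 hu
    have hfreq2 : ∃ᶠ n in atTop, ENNReal.ofReal (1/2)
        ≤ P (Bad X (fun _ => n) δ (1/2) ∩ H) / P H := by
      refine hfreq.mono fun n hn => le_trans hbound (le_trans hn ?_)
      exact ENNReal.div_le_div_right
        (measure_mono (inter_subset_inter_left _ (hBadMono n _ _ _ h2δ'))) _
    have hlimsup : ENNReal.ofReal (1/2)
        ≤ limsup (fun n => P (Bad X (fun _ => n) δ (1/2) ∩ H) / P H) atTop :=
      le_limsup_of_frequently_le hfreq2 (isBoundedUnder_of ⟨⊤, fun _ => le_top⟩)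
    exact absurd (hall H hHmeas hHpos) (not_lt.mpr hlimsup)
end

section
/- If (Z_n) is i.i.d. real-valued with E[Z_1²] < ∞, and X_n = (Σ_{i=1}^n (Z_i − E[Z_1]))/√n, then the fluctuation condition (c) holds: for every ε > 0, inf_{δ>0} limsup_n P(max_{j : |n−j| ≤ nδ} |X_j − X_n| > ε) = 0. -/
open MeasureTheory ProbabilityTheory Filter Real Topology Set
open scoped ENNReal NNReal

section aux
variable {Ω : Type*} {mΩ : MeasurableSpace Ω} {P : Measure Ω}

lemma iIndepFun_reindex {β : Type*} [MeasurableSpace β] {f : ℕ → Ω → β} (e : ℕ → ℕ)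
    (he : Function.Injective e)
    (h : iIndepFun f P) :
    iIndepFun (fun k => f (e k)) P := by
  classical
  rw [iIndepFun_iff_measure_inter_preimage_eq_mul] at h ⊢
  intro S sets hsets
  set sets' : ℕ → Set β := fun i => if hi : ∃ k ∈ S, e k = i then sets hi.choose else Set.univ
  have hkey : ∀ k ∈ S, sets' (e k) = sets k := by
    intro k hk
    have hi : ∃ k' ∈ S, e k' = e k := ⟨k, hk, rfl⟩
    have := hi.choose_spec
    have hk' : hi.choose = k := he this.2
    simp only [sets', dif_pos hi, hk']
  have := h (S.image e) (sets := sets') ?mble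
  case mble =>
    intro i hi
    rcases Finset.mem_image.mp hi with ⟨k, hk, rfl⟩
    rw [hkey k hk]
    exact hsets k hk
  rw [Finset.prod_image (fun a ha b hb hab => he hab)] at this
  have hInter : (⋂ i ∈ S.image e, f i ⁻¹' sets' i) = ⋂ k ∈ S, (fun ω => f (e k) ω) ⁻¹' sets k := by
    ext ω
    simp only [Set.mem_iInter, Finset.mem_image]
    constructor
    · intro hh k hk
      have := hh (e k) ⟨k, hk, rfl⟩
      rwa [hkey k hk] at this
    · rintro hh i ⟨k, hk, rfl⟩
      rw [hkey k hk]; exact hh k hk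
  rw [hInter] at this
  rw [this]
  refine Finset.prod_congr rfl fun k hk => by rw [hkey k hk]

lemma kolmogorov_max_ineq (P : Measure Ω)
    [IsProbabilityMeasure P] (V : ℕ → Ω → ℝ) (hmeas : ∀ i, Measurable (V i))
    (hindep : iIndepFun V P)
    (hL2 : ∀ i, MemLp (V i) 2 P) (hmean : ∀ i, ∫ ω, V i ω ∂P = 0)
    (m : ℕ) {α : ℝ} (hα : 0 < α) :
    P {ω | ∃ k, k ≤ m ∧ α ≤ |∑ i ∈ Finset.range k, V i ω|} ≤
      ENNReal.ofReal ((∑ i ∈ Finset.range m, variance (V i) P) / α ^ 2) := by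
  classical
  set T : ℕ → Ω → ℝ := fun k => ∑ i ∈ Finset.range k, V i with hTdef
  have hTapp : ∀ k ω, T k ω = ∑ i ∈ Finset.range k, V i ω := by
    intro k ω; simp [hTdef]
  have hVint : ∀ i, Integrable (V i) P := fun i => (hL2 i).integrable one_le_two
  have hTL2 : ∀ k, MemLp (T k) 2 P := fun k =>
    memLp_finset_sum' _ fun i _ => hL2 i
  have hTint : ∀ k, Integrable (T k) P := fun k => (hTL2 k).integrable one_le_two
  have hTmean : ∀ k, ∫ ω, T k ω ∂P = 0 := by
    intro k
    simp only [hTapp]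
    rw [integral_finset_sum _ fun i _ => hVint i]
    simp [hmean]
  -- the filtration
  set ℱ : Filtration ℕ mΩ :=
    { seq := fun i => ⨆ k ∈ Set.Iio i, MeasurableSpace.comap (V k) inferInstance
      mono' := fun i j hij => biSup_mono fun k hk => lt_of_lt_of_le hk hij
      le' := fun i => iSup₂_le fun k _ => (hmeas k).comap_le } with hFdef
  have hVcomap : ∀ k, Measurable[MeasurableSpace.comap (V k) inferInstance] (V k) :=
    fun k s hs => ⟨s, hs, rfl⟩
  have hVle : ∀ k i, k < i → MeasurableSpace.comap (V k) inferInstance ≤ ℱ i := by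
    intro k i hk
    exact le_biSup (fun k => MeasurableSpace.comap (V k) inferInstance) hk
  have hVmeas : ∀ k i, k < i → StronglyMeasurable[ℱ i] (V k) := by
    intro k i hk
    exact ((hVcomap k).mono (hVle k i hk) le_rfl).stronglyMeasurable
  have hTmeas : ∀ k, StronglyMeasurable[ℱ k] (T k) := by
    intro k
    have heq : T k = fun a => ∑ i ∈ Finset.range k, V i a := by
      funext a; simp [hTdef]
    rw [heq]
    exact Finset.stronglyMeasurable_fun_sum _ fun i hi =>
      hVmeas i k (Finset.mem_range.mp hi)
  set f : ℕ → Ω → ℝ := fun k ω => T k ω ^ 2 with hfdef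
  have hadp : StronglyAdapted ℱ f := by
    intro k
    simp only [hfdef, pow_two]; exact (hTmeas k).mul (hTmeas k)
  have hint : ∀ k, Integrable (f k) P := fun k => (hTL2 k).integrable_sq
  -- independence of T i and V i
  have hindepTV : ∀ i, IndepFun (T i) (V i) P := by
    intro i
    exact hindep.indepFun_finsetSum_of_notMem hmeas (by simp)
  have hintTV : ∀ i, Integrable (fun ω => T i ω * V i ω) P := fun i =>
    (hindepTV i).integrable_mul (hTint i) (hVint i)
  -- independence of `comap (V i)` and `ℱ i`
  have hindepV : ∀ i, Indep (MeasurableSpace.comap (V i) inferInstance) (ℱ i) P := by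
    intro i
    have hdisj : Disjoint ({i} : Set ℕ) (Set.Iio i) :=
      Set.disjoint_singleton_left.mpr (Set.notMem_Iio.mpr le_rfl)
    have h := indep_iSup_of_disjoint (S := ({i} : Set ℕ)) (T := Set.Iio i)
      (fun n => (hmeas n).comap_le) hindep.iIndep hdisj
    have : (⨆ k ∈ ({i} : Set ℕ), MeasurableSpace.comap (V k) inferInstance)
        = MeasurableSpace.comap (V i) inferInstance := by simp
    rwa [this] at h
  have hcondV : ∀ i, P[V i | ℱ i] =ᵐ[P] fun _ => (0 : ℝ) := by
    intro i
    have := condExp_indep_eq (μ := P) (f := V i) (hmeas i).comap_le (ℱ.le i)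
      (hVcomap i).stronglyMeasurable (hindepV i)
    simpa [hmean i] using this
  -- the submartingale property
  have hsub : Submartingale f ℱ P := by
    refine submartingale_nat hadp hint fun i => ?_
    set g : Ω → ℝ := fun ω => 2 * (T i ω * V i ω) + V i ω ^ 2 with hgdef
    have hexp : f (i + 1) = f i + g := by
      funext ω
      simp only [hfdef, hgdef, Pi.add_apply, hTapp, Finset.sum_range_succ]
      ring
    have hg1int : Integrable (fun ω => 2 * (T i ω * V i ω)) P := (hintTV i).const_mul 2
    have hg2int : Integrable (fun ω => V i ω ^ 2) P := (hL2 i).integrable_sq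
    have hgint : Integrable g P := hg1int.add hg2int
    have h1 : P[f (i + 1) | ℱ i] =ᵐ[P] P[f i | ℱ i] + P[g | ℱ i] := by
      rw [hexp]; exact condExp_add (hint i) hgint _
    have h2 : P[g | ℱ i] =ᵐ[P]
        P[(fun ω => 2 * (T i ω * V i ω)) | ℱ i] + P[(fun ω => V i ω ^ 2) | ℱ i] :=
      condExp_add hg1int hg2int _
    have h3 : P[(fun ω => 2 * (T i ω * V i ω)) | ℱ i] =ᵐ[P]
        (fun ω => 2 * T i ω) * P[V i | ℱ i] := by
      have hsm : StronglyMeasurable[ℱ i] (fun ω => 2 * T i ω) :=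
        (stronglyMeasurable_const.mul (hTmeas i))
      have heq : (fun ω => 2 * (T i ω * V i ω)) = (fun ω => 2 * T i ω) * V i := by
        funext ω; simp only [Pi.mul_apply]; ring
      rw [heq]
      exact condExp_mul_of_stronglyMeasurable_left hsm (heq ▸ hg1int) (hVint i)
    have h5 : (0 : Ω → ℝ) ≤ᵐ[P] P[(fun ω => V i ω ^ 2) | ℱ i] :=
      condExp_nonneg (ae_of_all _ fun ω => sq_nonneg _)
    have hfi : P[f i | ℱ i] = f i :=
      condExp_of_stronglyMeasurable (ℱ.le i) (hadp i) (hint i)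
    filter_upwards [h1, h2, h3, hcondV i, h5] with ω e1 e2 e3 e4 e5
    rw [e1, Pi.add_apply, e2, Pi.add_apply, e3, Pi.mul_apply, e4, hfi]
    have e5' : (0:ℝ) ≤ (P[(fun ω => V i ω ^ 2) | ℱ i]) ω := e5
    nlinarith
  -- Doob's maximal inequality
  set εnn : ℝ≥0 := α.toNNReal ^ 2 with hεdef
  have hεcoe : ((εnn : ℝ≥0) : ℝ) = α ^ 2 := by
    simp [hεdef, Real.coe_toNNReal α hα.le]
  have hnonneg : (0 : ℕ → Ω → ℝ) ≤ f := fun k ω => sq_nonneg _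
  have hdoob := maximal_ineq hsub hnonneg (ε := εnn) m
  set s : Set Ω := {ω | (εnn : ℝ) ≤
    (Finset.range (m + 1)).sup' Finset.nonempty_range_add_one fun k => f k ω} with hsdef
  have hset : {ω | ∃ k, k ≤ m ∧ α ≤ |∑ i ∈ Finset.range k, V i ω|} = s := by
    ext ω
    simp only [hsdef, Set.mem_setOf_eq, Finset.le_sup'_iff, Finset.mem_range_succ_iff]
    constructor
    · rintro ⟨k, hk, h⟩
      refine ⟨k, hk, ?_⟩
      rw [hεcoe, hfdef]
      calc α ^ 2 ≤ |T k ω| ^ 2 := by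
            apply pow_le_pow_left₀ hα.le
            rw [hTapp]; exact h
        _ = T k ω ^ 2 := sq_abs _
    · rintro ⟨k, hk, h⟩
      refine ⟨k, hk, ?_⟩
      rw [hεcoe] at h
      have : α ≤ |T k ω| := by
        have := Real.sqrt_le_sqrt h
        rwa [Real.sqrt_sq hα.le, hfdef, Real.sqrt_sq_eq_abs] at this
      rwa [hTapp] at this
  rw [hset]
  -- bound the right side of Doob
  have hsetint : ∫ ω in s, f m ω ∂P ≤ ∫ ω, f m ω ∂P :=
    setIntegral_le_integral (hint m) (ae_of_all _ fun ω => sq_nonneg _)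
  have hvar : ∫ ω, f m ω ∂P = ∑ i ∈ Finset.range m, variance (V i) P := by
    have h1 : variance (T m) P = ∑ i ∈ Finset.range m, variance (V i) P := by
      apply IndepFun.variance_sum (fun i _ => hL2 i)
      intro i _ j _ hij
      exact hindep.indepFun hij
    rw [← h1, variance_eq_sub (hTL2 m), hTmean m]
    simp only [hfdef, Pi.pow_apply]
    ring_nf
  have hfinal : (εnn : ℝ≥0∞) * P s ≤ ENNReal.ofReal (∑ i ∈ Finset.range m, variance (V i) P) := by
    calc (εnn : ℝ≥0∞) * P s = εnn • P s := rfl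
      _ ≤ ENNReal.ofReal (∫ ω in s, f m ω ∂P) := hdoob
      _ ≤ ENNReal.ofReal (∑ i ∈ Finset.range m, variance (V i) P) := by
          apply ENNReal.ofReal_le_ofReal
          rw [← hvar]; exact hsetint
  have hα2 : (0 : ℝ) < α ^ 2 := by positivity
  rw [ENNReal.ofReal_div_of_pos hα2]
  rw [ENNReal.le_div_iff_mul_le (Or.inl (by simp [hα2, hα.ne'])) (Or.inl ENNReal.ofReal_ne_top)]
  have : ENNReal.ofReal (α ^ 2) = (εnn : ℝ≥0∞) := by
    rw [← hεcoe, ENNReal.ofReal_coe_nnreal]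
  rw [this, mul_comm]
  exact hfinal

set_option maxHeartbeats 1000000 in
lemma chain_ineq {ε δ a b rn rj nn jj : ℝ} (hε : 0 < ε) (hδ : 0 < δ) (hδ2 : δ ≤ 1/2)
    (hrn : 0 < rn) (hrj : 0 < rj) (hrn2 : rn ^ 2 = nn) (hrj2 : rj ^ 2 = jj)
    (hjn : |nn - jj| ≤ nn * δ)
    (hd : |a - b| ≤ ε * rn / 4)
    (hb : |b| ≤ ε * rn / (4 * (Real.sqrt 2 * δ))) :
    |a / rj - b / rn| ≤ 3 * ε / 4 := by
  obtain ⟨s2, hs2def⟩ : ∃ s2, s2 = Real.sqrt 2 := ⟨_, rfl⟩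
  rw [← hs2def] at hb
  have hs2sq : s2 ^ 2 = 2 := by rw [hs2def]; exact Real.sq_sqrt (by norm_num)
  have hs2pos : 0 < s2 := by rw [hs2def]; exact Real.sqrt_pos.mpr (by norm_num)
  have hs2le : s2 ≤ 3 / 2 := by nlinarith
  have hs2ge : 1 ≤ s2 := by nlinarith
  have hnn : 0 ≤ nn := by rw [← hrn2]; positivity
  have hjj : nn / 2 ≤ jj := by
    have h1 : nn - jj ≤ |nn - jj| := le_abs_self _
    nlinarith
  have h2jj : (s2 * rj) ^ 2 = 2 * jj := by rw [mul_pow, hs2sq, hrj2]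
  have hsqle : rn ^ 2 ≤ (s2 * rj) ^ 2 := by rw [h2jj, hrn2]; linarith
  have hrnrj : rn ≤ s2 * rj := by
    calc rn = Real.sqrt (rn ^ 2) := (Real.sqrt_sq hrn.le).symm
      _ ≤ Real.sqrt ((s2 * rj) ^ 2) := Real.sqrt_le_sqrt hsqle
      _ = s2 * rj := Real.sqrt_sq (by positivity)
  have habs1 : |rn - rj| * (rn + rj) = |nn - jj| := by
    rw [← abs_of_pos (add_pos hrn hrj), ← abs_mul]
    congr 1
    rw [← hrn2, ← hrj2]; ring
  have hkey : |rn - rj| ≤ rn * δ := by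
    have h1 : |rn - rj| * (rn + rj) ≤ nn * δ := habs1 ▸ hjn
    have h2 : nn * δ ≤ rn * δ * (rn + rj) := by
      rw [← hrn2]
      nlinarith [mul_nonneg (mul_nonneg hrn.le hδ.le) hrj.le]
    have h3 : 0 < rn + rj := add_pos hrn hrj
    nlinarith [abs_nonneg (rn - rj)]
  have hdec : a / rj - b / rn = (a - b) / rn + a * (rn - rj) / (rn * rj) := by
    field_simp
    ring
  have htri : |a / rj - b / rn| ≤ |a - b| / rn + |a| * |rn - rj| / (rn * rj) := by
    rw [hdec]
    refine (abs_add_le _ _).trans ?_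
    rw [abs_div, abs_div, abs_of_pos hrn, abs_mul, abs_of_pos (mul_pos hrn hrj)]
  have t1 : |a - b| / rn ≤ ε / 4 := by
    rw [div_le_iff₀ hrn]
    calc |a - b| ≤ ε * rn / 4 := hd
      _ = ε / 4 * rn := by ring
  have hinv : |rn - rj| / (rn * rj) ≤ s2 * δ / rn := by
    rw [div_le_div_iff₀ (by positivity) hrn]
    nlinarith [mul_le_mul_of_nonneg_right hkey hrn.le,
      mul_le_mul_of_nonneg_right hrnrj (mul_nonneg hδ.le (mul_nonneg hrn.le hrj.le))]
  have ha : |a| ≤ ε * rn / (4 * (s2 * δ)) + ε * rn / 4 := by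
    have : |a| ≤ |b| + |a - b| := by
      calc |a| = |b + (a - b)| := by ring_nf
        _ ≤ |b| + |a - b| := abs_add_le _ _
    linarith
  have t2 : |a| * |rn - rj| / (rn * rj) ≤ ε / 4 + ε / 4 := by
    have h1 : |a| * |rn - rj| / (rn * rj) = |a| * (|rn - rj| / (rn * rj)) := by ring
    rw [h1]
    have h2 : |a| * (|rn - rj| / (rn * rj)) ≤ (ε * rn / (4 * (s2 * δ)) + ε * rn / 4) * (s2 * δ / rn) := by
      apply mul_le_mul ha hinv (by positivity) (by positivity)
    have h3 : (ε * rn / (4 * (s2 * δ)) + ε * rn / 4) * (s2 * δ / rn) = ε / 4 + ε * (s2 * δ) / 4 := by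
      field_simp
    have h5 : s2 * δ ≤ 1 := by nlinarith [mul_le_mul hs2le hδ2 hδ.le (by norm_num : (0:ℝ) ≤ 3/2)]
    have h4 : ε * (s2 * δ) / 4 ≤ ε / 4 := by nlinarith [mul_le_mul_of_nonneg_left h5 hε.le]
    linarith
  linarith

set_option maxHeartbeats 1000000 in
lemma key_bound (P : Measure Ω) [IsProbabilityMeasure P] (W : ℕ → Ω → ℝ)
    (hWmeas : ∀ i, Measurable (W i))
    (hWindep : iIndepFun W P)
    (hWL2 : ∀ i, MemLp (W i) 2 P) (hWmean : ∀ i, ∫ ω, W i ω ∂P = 0)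
    {v : ℝ} (hvar : ∀ i, variance (W i) P = v)
    {ε δ : ℝ} (hε : 0 < ε) (hδ : 0 < δ) (hδ2 : δ ≤ 1/2) {n : ℕ} (hn : 2 ≤ n) :
    P {ω | ∃ j : ℕ, |(n : ℝ) - j| ≤ (n : ℝ) * δ ∧
        ε < |(∑ i ∈ Finset.Icc 1 j, W i ω) / Real.sqrt j -
             (∑ i ∈ Finset.Icc 1 n, W i ω) / Real.sqrt n|} ≤
      ENNReal.ofReal (48 * δ * v / ε ^ 2) := by
  classical
  have hv0 : 0 ≤ v := (hvar 0) ▸ variance_nonneg _ _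
  have hnR : (2 : ℝ) ≤ n := by exact_mod_cast hn
  have hn0 : (0 : ℝ) < n := by linarith
  set S : ℕ → Ω → ℝ := fun t => ∑ i ∈ Finset.Icc 1 t, W i with hSdef
  have hSapp : ∀ t ω, S t ω = ∑ i ∈ Finset.Icc 1 t, W i ω := by
    intro t ω; simp [hSdef]
  have hSL2 : ∀ t, MemLp (S t) 2 P := fun t => memLp_finset_sum' _ fun i _ => hWL2 i
  have hSmean : ∀ t, ∫ ω, S t ω ∂P = 0 := by
    intro t
    simp only [hSapp]
    rw [integral_finset_sum _ fun i _ => (hWL2 i).integrable one_le_two]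
    simp [hWmean]
  set m := Nat.floor ((n : ℝ) * δ) with hmdef
  have hm : (m : ℝ) ≤ (n : ℝ) * δ := Nat.floor_le (by positivity)
  have hmn : m ≤ n := by
    have h1 : (m : ℝ) ≤ (n : ℝ) := by nlinarith
    exact_mod_cast h1
  have hrn : (0 : ℝ) < Real.sqrt n := Real.sqrt_pos.mpr hn0
  set α1 : ℝ := ε * Real.sqrt n / 4 with hα1def
  have hα1 : 0 < α1 := by positivity
  have hs2pos : (0:ℝ) < Real.sqrt 2 := Real.sqrt_pos.mpr (by norm_num)
  set c : ℝ := ε * Real.sqrt n / (4 * (Real.sqrt 2 * δ)) with hcdef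
  have hc : 0 < c := by positivity
  set e1 : ℕ → ℕ := fun k => n + 1 + k with he1def
  have he1 : Function.Injective e1 := fun a b h => by simpa [he1def] using h
  set e2 : ℕ → ℕ := fun k => if k ≤ n then n - k else n + 1 + k with he2def
  have he2 : Function.Injective e2 := by
    intro a b h
    simp only [he2def] at h
    split_ifs at h <;> omega
  set A1 : Set Ω := {ω | ∃ k, k ≤ m ∧ α1 ≤ |∑ i ∈ Finset.range k, W (e1 i) ω|} with hA1def
  set A2 : Set Ω := {ω | ∃ k, k ≤ m ∧ α1 ≤ |∑ i ∈ Finset.range k, W (e2 i) ω|} with hA2def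
  set B : Set Ω := {ω | c ≤ |S n ω|} with hBdef
  -- probability bounds
  have hx0 : (0:ℝ) ≤ 16 * δ * v / ε ^ 2 := by positivity
  have hα1sq : α1 ^ 2 = ε ^ 2 * n / 16 := by
    rw [hα1def, div_pow, mul_pow, Real.sq_sqrt (Nat.cast_nonneg n)]
    norm_num
  have hPA1 : P A1 ≤ ENNReal.ofReal (16 * δ * v / ε ^ 2) := by
    refine le_trans (kolmogorov_max_ineq P (fun k => W (e1 k)) (fun k => hWmeas _)
      (iIndepFun_reindex e1 he1 hWindep) (fun k => hWL2 _) (fun k => hWmean _) m hα1) ?_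
    apply ENNReal.ofReal_le_ofReal
    have hsum : ∑ i ∈ Finset.range m, variance (W (e1 i)) P = m * v := by
      simp [hvar, Finset.sum_const, Finset.card_range, nsmul_eq_mul]
    rw [hsum, hα1sq, div_le_div_iff₀ (by positivity) (by positivity)]
    nlinarith [mul_le_mul_of_nonneg_right hm (mul_nonneg hv0 (sq_nonneg ε))]
  have hPA2 : P A2 ≤ ENNReal.ofReal (16 * δ * v / ε ^ 2) := by
    refine le_trans (kolmogorov_max_ineq P (fun k => W (e2 k)) (fun k => hWmeas _)
      (iIndepFun_reindex e2 he2 hWindep) (fun k => hWL2 _) (fun k => hWmean _) m hα1) ?_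
    apply ENNReal.ofReal_le_ofReal
    have hsum : ∑ i ∈ Finset.range m, variance (W (e2 i)) P = m * v := by
      simp [hvar, Finset.sum_const, Finset.card_range, nsmul_eq_mul]
    rw [hsum, hα1sq, div_le_div_iff₀ (by positivity) (by positivity)]
    nlinarith [mul_le_mul_of_nonneg_right hm (mul_nonneg hv0 (sq_nonneg ε))]
  have hSvar : variance (S n) P = n * v := by
    rw [hSdef]
    rw [IndepFun.variance_sum (fun i _ => hWL2 i)
      (fun i _ j _ hij => hWindep.indepFun hij)]
    simp [hvar, Finset.sum_const, Nat.card_Icc, nsmul_eq_mul]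
  have hcsq : c ^ 2 = ε ^ 2 * n / (32 * δ ^ 2) := by
    rw [hcdef, div_pow, mul_pow, mul_pow, mul_pow,
      Real.sq_sqrt (by norm_num : (0:ℝ) ≤ 2), Real.sq_sqrt (Nat.cast_nonneg n)]
    ring
  have hPB : P B ≤ ENNReal.ofReal (16 * δ * v / ε ^ 2) := by
    have h0 := meas_ge_le_variance_div_sq (hSL2 n) hc
    have hseteq : {ω | c ≤ |S n ω - P[S n]|} = B := by
      rw [show P[S n] = (0:ℝ) from hSmean n]
      simp [hBdef]
    rw [hseteq] at h0
    refine le_trans h0 (ENNReal.ofReal_le_ofReal ?_)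
    rw [hSvar, hcsq]
    have heq : (n : ℝ) * v / (ε ^ 2 * n / (32 * δ ^ 2)) = 32 * δ ^ 2 * v / ε ^ 2 := by
      field_simp
    rw [heq, div_le_div_iff₀ (by positivity) (by positivity)]
    nlinarith [mul_nonneg (mul_nonneg (mul_nonneg hδ.le hv0) (sq_nonneg ε))
      (by linarith : (0:ℝ) ≤ 1 - 2 * δ)]
  -- set inclusion
  have hincl : {ω | ∃ j : ℕ, |(n : ℝ) - j| ≤ (n : ℝ) * δ ∧
      ε < |(∑ i ∈ Finset.Icc 1 j, W i ω) / Real.sqrt j -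
           (∑ i ∈ Finset.Icc 1 n, W i ω) / Real.sqrt n|} ⊆ A1 ∪ A2 ∪ B := by
    intro ω hω
    obtain ⟨j, hj, hdist⟩ := hω
    rw [← hSapp, ← hSapp] at hdist
    by_contra hnot
    simp only [Set.mem_union, hA1def, hA2def, hBdef, Set.mem_setOf_eq, not_or,
      not_exists, not_and, not_le] at hnot
    obtain ⟨⟨h1, h2⟩, h3⟩ := hnot
    have hδn : (n : ℝ) * δ ≤ n / 2 := by nlinarith
    have hjhalf : (n : ℝ) / 2 ≤ j := by
      have := (abs_le.mp hj).2
      linarith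
    have hj1 : (0 : ℝ) < j := by linarith
    have hrj : (0 : ℝ) < Real.sqrt j := Real.sqrt_pos.mpr hj1
    -- sum identities
    have hfwd : ∀ k, (∑ i ∈ Finset.range k, W (e1 i) ω) = S (n + k) ω - S n ω := by
      intro k
      induction k with
      | zero => simp
      | succ k ih =>
        rw [Finset.sum_range_succ, ih]
        have hstep : S (n + (k + 1)) ω = S (n + k) ω + W (n + 1 + k) ω := by
          simp only [hSapp]
          rw [show n + (k + 1) = (n + k) + 1 by ring,
            Finset.sum_Icc_succ_top (by omega : 1 ≤ n + k + 1)]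
          rw [show n + k + 1 = n + 1 + k by ring]
        rw [hstep, he1def]
        ring
    have hbwd : ∀ k, k ≤ n → (∑ i ∈ Finset.range k, W (e2 i) ω) = S n ω - S (n - k) ω := by
      intro k hk
      induction k with
      | zero => simp
      | succ k ih =>
        have hk' : k ≤ n := by omega
        rw [Finset.sum_range_succ, ih hk']
        have he : e2 k = n - k := if_pos hk'
        have hstep : S (n - k) ω = S (n - (k + 1)) ω + W (n - k) ω := by
          simp only [hSapp]
          rw [show n - k = (n - (k + 1)) + 1 by omega,
            Finset.sum_Icc_succ_top (by omega : 1 ≤ (n - (k+1)) + 1)]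
        rw [he, hstep]
        ring
    -- apply chain_ineq
    have hmain : |S j ω / Real.sqrt j - S n ω / Real.sqrt n| ≤ 3 * ε / 4 := by
      have hd : |S j ω - S n ω| ≤ ε * Real.sqrt n / 4 := by
        rcases le_total n j with hcase | hcase
        · have hk : j - n ≤ m := by
            refine Nat.le_floor ?_
            have h4 := (abs_le.mp hj).1
            push_cast [hcase]
            linarith
          have h5 := h1 (j - n) hk
          rw [hfwd (j - n), show n + (j - n) = j by omega] at h5
          exact h5.le
        · have hk : n - j ≤ m := by
            refine Nat.le_floor ?_
            have h4 := (abs_le.mp hj).2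
            push_cast [hcase]
            linarith
          have h5 := h2 (n - j) hk
          rw [hbwd (n - j) (by omega), show n - (n - j) = j by omega] at h5
          rw [abs_sub_comm]
          exact h5.le
      have hb : |S n ω| ≤ ε * Real.sqrt n / (4 * (Real.sqrt 2 * δ)) := h3.le
      exact chain_ineq hε hδ hδ2 hrn hrj (Real.sq_sqrt (Nat.cast_nonneg n))
        (Real.sq_sqrt (Nat.cast_nonneg j)) hj hd hb
    linarith
  -- combine
  calc P _ ≤ P (A1 ∪ A2 ∪ B) := measure_mono hincl
    _ ≤ P (A1 ∪ A2) + P B := measure_union_le _ _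
    _ ≤ (P A1 + P A2) + P B := add_le_add_left (measure_union_le _ _) _
    _ ≤ (ENNReal.ofReal (16 * δ * v / ε ^ 2) + ENNReal.ofReal (16 * δ * v / ε ^ 2)) +
        ENNReal.ofReal (16 * δ * v / ε ^ 2) := by
        exact add_le_add (add_le_add hPA1 hPA2) hPB
    _ = ENNReal.ofReal (48 * δ * v / ε ^ 2) := by
        rw [← ENNReal.ofReal_add hx0 hx0, ← ENNReal.ofReal_add (by positivity) hx0]
        congr 1
        ring

end aux

/-- for an i.i.d. sequence with finite second moment, the normalized
centered partial sums satisfy the fluctuation condition (c). -/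
theorem stmt14 {Ω : Type*} [MeasurableSpace Ω] (P : Measure Ω) [IsProbabilityMeasure P]
    (Z : ℕ → Ω → ℝ) (hmeas : ∀ i, Measurable (Z i))
    (hindep : iIndepFun Z P)
    (hident : ∀ i, Measure.map (Z i) P = Measure.map (Z 1) P)
    (hL1 : Integrable (Z 1) P)
    (hL2 : Integrable (fun ω => Z 1 ω ^ 2) P) :
    FlucIdx P
      (fun n ω => (∑ i ∈ Finset.Icc 1 n, (Z i ω - ∫ ω', Z 1 ω' ∂P)) / Real.sqrt n)
      (fun n _ => n) := by
  intro ε hε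
  set μ1 := ∫ ω', Z 1 ω' ∂P with hμ1
  set W : ℕ → Ω → ℝ := fun i ω => Z i ω - μ1 with hW
  have hWmeas : ∀ i, Measurable (W i) := fun i => (hmeas i).sub measurable_const
  have hid : ∀ i, IdentDistrib (Z i) (Z 1) P P :=
    fun i => ⟨(hmeas i).aemeasurable, (hmeas 1).aemeasurable, hident i⟩
  have hZ1L2 : MemLp (Z 1) 2 P :=
    (memLp_two_iff_integrable_sq (hmeas 1).aestronglyMeasurable).mpr hL2
  have hZL2 : ∀ i, MemLp (Z i) 2 P := fun i => (hid i).symm.memLp_snd hZ1L2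
  have hWL2 : ∀ i, MemLp (W i) 2 P := fun i => (hZL2 i).sub (memLp_const μ1)
  have hWmean : ∀ i, ∫ ω, W i ω ∂P = 0 := by
    intro i
    have h1 : ∫ ω, W i ω ∂P = (∫ ω, Z i ω ∂P) - μ1 := by
      simp only [hW]
      rw [integral_sub ((hZL2 i).integrable one_le_two) (integrable_const μ1),
        integral_const]
      simp
    rw [h1, (hid i).integral_eq]
    simp [hμ1]
  have hWindep : iIndepFun W P := by
    have := hindep.comp (fun _ => fun x : ℝ => x - μ1)
      (fun _ => measurable_id.sub measurable_const)
    exact this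
  have hWid : ∀ i, IdentDistrib (W i) (W 1) P P :=
    fun i => (hid i).comp (measurable_id.sub measurable_const)
  set v := variance (W 1) P with hv
  have hvar : ∀ i, variance (W i) P = v := fun i => (hWid i).variance_eq
  have hv0 : 0 ≤ v := variance_nonneg _ _
  refine le_antisymm ?_ zero_le
  refine ENNReal.le_of_forall_pos_le_add fun η hη _ => ?_
  rw [zero_add]
  have hηR : (0:ℝ) < η := hη
  set δ0 : ℝ := min (1/2) ((η : ℝ) * ε ^ 2 / (48 * v + 1)) with hδ0
  have hδ0pos : 0 < δ0 := lt_min (by norm_num) (by positivity)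
  have hδ0half : δ0 ≤ 1/2 := min_le_left _ _
  have hkey : Filter.limsup (fun n => P (Bad
      (fun n ω => (∑ i ∈ Finset.Icc 1 n, (Z i ω - μ1)) / Real.sqrt n)
      ((fun n (_ : Ω) => n) n) δ0 ε)) atTop ≤ ENNReal.ofReal (48 * δ0 * v / ε ^ 2) := by
    refine limsup_le_of_le (by isBoundedDefault) ?_
    filter_upwards [eventually_ge_atTop 2] with n hn
    refine le_trans (measure_mono ?_)
      (key_bound P W hWmeas hWindep hWL2 hWmean hvar hε hδ0pos hδ0half hn)
    intro ω hω
    obtain ⟨j, hj, hd⟩ := hω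
    refine ⟨j, hj, ?_⟩
    rw [Real.dist_eq] at hd
    simpa [hW] using hd
  have hstep : (⨅ δ : Set.Ioi (0:ℝ), Filter.limsup (fun n => P (Bad
      (fun n ω => (∑ i ∈ Finset.Icc 1 n, (Z i ω - μ1)) / Real.sqrt n)
      ((fun n (_ : Ω) => n) n) (δ : ℝ) ε)) atTop) ≤ ENNReal.ofReal (48 * δ0 * v / ε ^ 2) :=
    le_trans (iInf_le _ (⟨δ0, hδ0pos⟩ : Set.Ioi (0:ℝ))) hkey
  refine le_trans hstep ?_
  · rw [← ENNReal.ofReal_coe_nnreal]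
    apply ENNReal.ofReal_le_ofReal
    have h1 : δ0 ≤ (η : ℝ) * ε ^ 2 / (48 * v + 1) := min_le_right _ _
    have h2 : δ0 * (48 * v + 1) ≤ (η : ℝ) * ε ^ 2 := by
      rw [← le_div_iff₀ (by positivity)]
      exact h1
    rw [div_le_iff₀ (by positivity : (0:ℝ) < ε ^ 2)]
    nlinarith [hδ0pos.le, hv0]
end
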